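/- arXiv:2208.09806 — 3 statements merged into one kernel-verified Lean document; each statement's English description precedes it below -/
import Mathlib

section
/- Let μ denote the Möbius function. Suppose that for every ε > 0 there exists a constant C_ε > 0 such that |Σ_{1 ≤ n ≤ x} μ(n)e^{2πint}| ≤ C_ε·x^{3/4+ε} for all real x ≥ 1 and all t ∈ ℝ (this estimate holds under the Generalized Riemann Hypothesis). Then the Hausdorff dimensions of the graphs {(t, |F(μ;t)|) : t ∈ [0,1]}, {(t, Re F(μ;t)) : t ∈ [0,1]}, and {(t, Im F(μ;t)) : t ∈ [0,1]} in ℝ² are each at most 7/4. -/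
open Filter Finset Topology Set MeasureTheory
open scoped ENNReal NNReal


lemma ediam_prod_le (s t : Set ℝ) :
    EMetric.diam (s ×ˢ t) ≤ max (EMetric.diam s) (EMetric.diam t) := by
  apply EMetric.diam_le
  rintro ⟨x1, x2⟩ ⟨hx1, hx2⟩ ⟨y1, y2⟩ ⟨hy1, hy2⟩
  rw [Prod.edist_eq]
  exact max_le_max (EMetric.edist_le_diam_of_mem hx1 hy1)
    (EMetric.edist_le_diam_of_mem hx2 hy2)

lemma graph_dimH_le (f : ℝ → ℝ) (α C : ℝ) (hα0 : 0 < α) (hα1 : α ≤ 1) (hC : 0 < C)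
    (H : ∀ s ∈ Set.Icc (0:ℝ) 1, ∀ t ∈ Set.Icc (0:ℝ) 1, |f t - f s| ≤ C * |t - s| ^ α) :
    dimH {q : ℝ × ℝ | q.1 ∈ Set.Icc (0:ℝ) 1 ∧ q.2 = f q.1} ≤ ENNReal.ofReal (2 - α) := by
  set G := {q : ℝ × ℝ | q.1 ∈ Set.Icc (0:ℝ) 1 ∧ q.2 = f q.1} with hG
  refine dimH_le fun d' hd' => ?_
  by_contra hlt
  push_neg at hlt
  have hd : 2 - α < (d' : ℝ) := by
    have h2 : (0:ℝ) ≤ 2 - α := by linarith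
    have := (ENNReal.ofReal_lt_iff_lt_toReal h2 (ENNReal.coe_ne_top)).mp hlt
    simpa using this
  set d : ℝ := (d' : ℝ) with hdd
  have hd0 : 0 ≤ d := d'.coe_nonneg
  -- basic quantities
  set δ : ℕ → ℝ := fun k => ((k:ℝ)+1)⁻¹ with hδ
  have hδpos : ∀ k, 0 < δ k := fun k => by positivity
  set M : ℕ → ℕ := fun k => ⌈2*C*((k:ℝ)+1)^(1-α)⌉₊ with hM
  have hMpos : ∀ k, 0 < M k := fun k => Nat.ceil_pos.mpr (by positivity)
  set box : ∀ k : ℕ, Fin (k+1) × Fin (M k) → Set (ℝ×ℝ) := fun k i =>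
    Set.Icc ((i.1:ℝ) * δ k) (((i.1:ℝ)+1) * δ k) ×ˢ
    Set.Icc (f ((i.1:ℝ) * δ k) - C * δ k ^ α + (i.2:ℝ) * δ k)
            (f ((i.1:ℝ) * δ k) - C * δ k ^ α + ((i.2:ℝ)+1) * δ k) with hbox
  have hdiam : ∀ k i, EMetric.diam (box k i) ≤ ENNReal.ofReal (δ k) := by
    intro k i
    refine (ediam_prod_le _ _).trans ?_
    rw [EMetric.diam, Real.ediam_Icc, Real.ediam_Icc]
    apply max_le <;> · apply ENNReal.ofReal_le_ofReal; ring_nf; simp [le_refl]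
  -- covering
  have hcover : ∀ k, G ⊆ ⋃ i, box k i := by
    intro k q hq
    obtain ⟨⟨ht0, ht1⟩, hq2⟩ := hq
    set t := q.1 with hts
    have hknn : (0:ℝ) < (k:ℝ)+1 := by positivity
    set j : ℕ := min ⌊t * ((k:ℝ)+1)⌋₊ k with hj
    have hjk : j < k + 1 := Nat.lt_succ_of_le (min_le_right _ _)
    have hjle : (j:ℝ) * δ k ≤ t := by
      have h1 : (j:ℝ) ≤ ⌊t * ((k:ℝ)+1)⌋₊ := Nat.cast_le.mpr (min_le_left _ _)
      have h2 : (⌊t * ((k:ℝ)+1)⌋₊ : ℝ) ≤ t * ((k:ℝ)+1) :=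
        Nat.floor_le (by positivity)
      rw [hδ]
      rw [mul_inv_le_iff₀ hknn]
      linarith
    have hlej : t ≤ ((j:ℝ)+1) * δ k := by
      rw [hδ, le_mul_inv_iff₀ hknn]
      rcases le_or_gt ⌊t * ((k:ℝ)+1)⌋₊ k with hc | hc
      · have hje : j = ⌊t * ((k:ℝ)+1)⌋₊ := min_eq_left hc
        have := Nat.lt_floor_add_one (t * ((k:ℝ)+1))
        rw [hje]
        push_cast
        linarith
      · have hje : j = k := min_eq_right hc.le
        have : t * ((k:ℝ)+1) ≤ ((k:ℝ)+1) := by nlinarith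
        rw [hje]; push_cast; linarith
    have hjmem : (j:ℝ) * δ k ∈ Set.Icc (0:ℝ) 1 := by
      constructor
      · positivity
      · calc (j:ℝ) * δ k ≤ t := hjle
          _ ≤ 1 := ht1
    have hosc : |f t - f ((j:ℝ) * δ k)| ≤ C * δ k ^ α := by
      have h1 := H ((j:ℝ) * δ k) hjmem t ⟨ht0, ht1⟩
      have h2 : |t - (j:ℝ) * δ k| ≤ δ k := by
        rw [abs_of_nonneg (by linarith)]
        have := hlej; nlinarith [hδpos k]
      calc |f t - f ((j:ℝ) * δ k)| ≤ C * |t - (j:ℝ) * δ k| ^ α := h1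
        _ ≤ C * δ k ^ α := by gcongr
    -- vertical index
    set u : ℝ := f t - (f ((j:ℝ) * δ k) - C * δ k ^ α) with hu
    have habs := abs_le.mp hosc
    have hu0 : 0 ≤ u := by rw [hu]; linarith [habs.2]
    have hu2 : u ≤ 2 * (C * δ k ^ α) := by rw [hu]; linarith [habs.1]
    set m : ℕ := min ⌊u / δ k⌋₊ (M k - 1) with hm
    have hmM : m < M k := by
      have h1 : m ≤ M k - 1 := min_le_right _ _
      have h2 := hMpos k
      omega
    have hmle : (m:ℝ) * δ k ≤ u := by
      have h1 : (m:ℝ) ≤ ⌊u / δ k⌋₊ := Nat.cast_le.mpr (min_le_left _ _)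
      have h2 : (⌊u / δ k⌋₊:ℝ) ≤ u / δ k := Nat.floor_le (by positivity)
      calc (m:ℝ) * δ k ≤ (u / δ k) * δ k :=
            mul_le_mul_of_nonneg_right (h1.trans h2) (hδpos k).le
        _ = u := div_mul_cancel₀ _ (hδpos k).ne'
    have hlem : u ≤ ((m:ℝ)+1) * δ k := by
      rcases le_or_gt ⌊u / δ k⌋₊ (M k - 1) with hc | hc
      · have hje : m = ⌊u / δ k⌋₊ := min_eq_left hc
        have h3 := Nat.lt_floor_add_one (u / δ k)
        rw [hje]
        rw [← div_le_iff₀ (hδpos k)]  -- u / δ ≤ m+1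
        push_cast
        linarith
      · have hje : m = M k - 1 := min_eq_right hc.le
        have hMk : ((M k : ℝ)) ≥ 2*C*((k:ℝ)+1)^(1-α) := Nat.le_ceil _
        have hMδ : 2 * (C * δ k ^ α) ≤ (M k : ℝ) * δ k := by
          have hx : (0:ℝ) < (k:ℝ)+1 := by positivity
          have hδrw : δ k = ((k:ℝ)+1) ^ (-1 : ℝ) := by
            simp only [hδ]; rw [Real.rpow_neg_one]
          have hrw : ((k:ℝ)+1)^(1-α) * δ k = δ k ^ α := by
            rw [hδrw, ← Real.rpow_add hx, ← Real.rpow_mul hx.le]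
            congr 1
            ring
          calc 2 * (C * δ k ^ α) = 2*C*(((k:ℝ)+1)^(1-α) * δ k) := by rw [hrw]; ring
            _ ≤ (M k : ℝ) * δ k := by
                rw [← mul_assoc]
                gcongr
        have hm1 : (m:ℝ) + 1 = (M k : ℝ) := by
          rw [hje]
          have := hMpos k
          push_cast [Nat.cast_sub (by omega : 1 ≤ M k)]
          ring
        rw [hm1]
        linarith
    refine Set.mem_iUnion.mpr ⟨(⟨j, hjk⟩, ⟨m, hmM⟩), ?_⟩
    rw [hbox]
    constructor
    · exact ⟨hjle, hlej⟩
    · simp only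
      constructor
      · rw [hq2]; rw [hu] at hmle; linarith
      · rw [hq2]; rw [hu] at hlem; linarith
  -- Hausdorff measure bound
  have key : μH[d] G ≤ 0 := by
    have hle := MeasureTheory.Measure.hausdorffMeasure_le_liminf_sum d G (l := atTop)
      (fun k => ENNReal.ofReal (δ k)) ?_ box
      (Filter.Eventually.of_forall fun k => hdiam k)
      (Filter.Eventually.of_forall hcover)
    · refine hle.trans ?_
      have hbnd : ∀ k : ℕ, (∑ i : Fin (k+1) × Fin (M k), EMetric.diam (box k i) ^ d)
          ≤ ENNReal.ofReal ((2*C+1) * ((k:ℝ)+1) ^ (2 - α - d)) := by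
        intro k
        calc (∑ i : Fin (k+1) × Fin (M k), EMetric.diam (box k i) ^ d)
            ≤ ∑ _i : Fin (k+1) × Fin (M k), ENNReal.ofReal (δ k) ^ d := by
              refine Finset.sum_le_sum fun i _ => ?_
              exact ENNReal.rpow_le_rpow (hdiam k i) hd0
          _ = ((k+1) * M k : ℕ) * ENNReal.ofReal (δ k) ^ d := by
              rw [Finset.sum_const, Finset.card_univ]
              simp [nsmul_eq_mul]
          _ ≤ ENNReal.ofReal ((2*C+1) * ((k:ℝ)+1) ^ (2 - α - d)) := by
              rw [ENNReal.ofReal_rpow_of_pos (hδpos k),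
                ← ENNReal.ofReal_natCast, ← ENNReal.ofReal_mul (by positivity)]
              apply ENNReal.ofReal_le_ofReal
              have hMk : (M k : ℝ) ≤ (2*C+1) * ((k:ℝ)+1)^(1-α) := by
                have h1 : (M k : ℝ) ≤ 2*C*((k:ℝ)+1)^(1-α) + 1 := by
                  have := (Nat.ceil_lt_add_one (by positivity : (0:ℝ) ≤ 2*C*((k:ℝ)+1)^(1-α))).le
                  exact this
                have hk1 : (1:ℝ) ≤ (k:ℝ)+1 := by
                  have : (0:ℝ) ≤ (k:ℝ) := Nat.cast_nonneg k
                  linarith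
                have h2 : (1:ℝ) ≤ ((k:ℝ)+1)^(1-α) :=
                  Real.one_le_rpow hk1 (by linarith)
                nlinarith
              have hx : (0:ℝ) < (k:ℝ)+1 := by positivity
              have hδrw : δ k = ((k:ℝ)+1) ^ (-1 : ℝ) := by
                simp only [hδ]; rw [Real.rpow_neg_one]
              have hδd : δ k ^ d = ((k:ℝ)+1) ^ (-d) := by
                rw [hδrw, ← Real.rpow_mul hx.le]
                congr 1
                ring
              push_cast
              calc ((k:ℝ)+1) * (M k : ℝ) * δ k ^ d
                  ≤ ((k:ℝ)+1) * ((2*C+1) * ((k:ℝ)+1)^(1-α)) * ((k:ℝ)+1)^(-d) := by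
                    rw [hδd]; gcongr <;> positivity
                _ = (2*C+1) * (((k:ℝ)+1) ^ (1:ℝ) * ((k:ℝ)+1)^(1-α) * ((k:ℝ)+1)^(-d)) := by
                    rw [Real.rpow_one]; ring
                _ = (2*C+1) * ((k:ℝ)+1) ^ (2 - α - d) := by
                    rw [← Real.rpow_add (by positivity), ← Real.rpow_add (by positivity)]
                    ring_nf
      have htend : Tendsto (fun k : ℕ => ENNReal.ofReal ((2*C+1) * ((k:ℝ)+1) ^ (2 - α - d)))
          atTop (𝓝 0) := by
        rw [← ENNReal.ofReal_zero]
        apply ENNReal.tendsto_ofReal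
        have h1 : Tendsto (fun k : ℕ => ((k:ℝ)+1)) atTop atTop :=
          tendsto_atTop_add_const_right _ _ tendsto_natCast_atTop_atTop
        have h2 : Tendsto (fun x : ℝ => x ^ (-(d - (2 - α)))) atTop (𝓝 0) :=
          tendsto_rpow_neg_atTop (by linarith)
        have := (h2.comp h1).const_mul (2*C+1)
        simpa [mul_comm, neg_sub, sub_eq_add_neg, mul_zero] using this
      calc liminf (fun k : ℕ => ∑ i : Fin (k+1) × Fin (M k), EMetric.diam (box k i) ^ d) atTop
          ≤ liminf (fun k : ℕ => ENNReal.ofReal ((2*C+1) * ((k:ℝ)+1) ^ (2 - α - d))) atTop :=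
            Filter.liminf_le_liminf (Filter.Eventually.of_forall hbnd)
        _ = 0 := htend.liminf_eq
    · rw [← ENNReal.ofReal_zero]
      apply ENNReal.tendsto_ofReal
      rw [hδ]
      exact tendsto_one_div_add_atTop_nhds_zero_nat.congr (by intro n; rw [one_div])
  have : μH[d] G = 0 := le_antisymm key zero_le
  rw [hdd] at this
  exact absurd (this.symm.trans hd') ENNReal.zero_ne_top


noncomputable def mExp (n : ℕ) (t : ℝ) : ℂ :=
  (ArithmeticFunction.moebius n : ℂ) * Complex.exp (2 * Real.pi * Complex.I * (n : ℂ) * (t : ℂ))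

noncomputable def mE (N : ℕ) (t : ℝ) : ℂ := ∑ n ∈ Finset.Icc 1 N, mExp n t

noncomputable def mS (N : ℕ) (t : ℝ) : ℂ := ∑ n ∈ Finset.Icc 1 N, mExp n t / n

lemma mS_hasDerivAt (N : ℕ) (t : ℝ) :
    HasDerivAt (fun u : ℝ => mS N u) (2 * Real.pi * Complex.I * mE N t) t := by
  have h1 : ∀ n ∈ Finset.Icc 1 N, HasDerivAt (fun u : ℝ => mExp n u / n)
      (2 * Real.pi * Complex.I * mExp n t) t := by
    intro n hn
    have hn1 : 1 ≤ n := (Finset.mem_Icc.mp hn).1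
    have hn0 : (n:ℂ) ≠ 0 := Nat.cast_ne_zero.mpr (by omega)
    have hc : HasDerivAt (fun z : ℂ => Complex.exp (2 * Real.pi * Complex.I * (n:ℂ) * z))
        (Complex.exp (2 * Real.pi * Complex.I * (n:ℂ) * (t:ℂ)) *
          (2 * Real.pi * Complex.I * (n:ℂ))) (t:ℂ) := by
      simpa using ((hasDerivAt_id ((t:ℂ))).const_mul (2 * Real.pi * Complex.I * (n:ℂ))).cexp
    have hc' := hc.comp_ofReal
    have h2 := (hc'.const_mul ((ArithmeticFunction.moebius n : ℂ))).div_const ((n:ℕ):ℂ)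
    unfold mExp
    convert h2 using 1
    · exact rfl
    field_simp
  have hsum := HasDerivAt.fun_sum h1
  unfold mS mE
  convert hsum using 1
  · exact rfl
  rw [Finset.mul_sum]

lemma key_rpow {q : ℝ} (hq0 : 0 < q) (hq1 : q < 1) {x : ℝ} (hx : 1 ≤ x) :
    x ^ (-(q+1)) ≤ (2 ^ (q+1) / q) * (x ^ (-q) - (x+1) ^ (-q)) := by
  have hx0 : (0:ℝ) < x := lt_of_lt_of_le one_pos hx
  have hx10 : (0:ℝ) < x + 1 := by linarith
  -- Bernoulli step : (x/(x+1))^q ≤ 1 - q/(x+1)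
  have hs : (-1:ℝ) ≤ -(1/(x+1)) := by
    rw [neg_le_neg_iff]
    rw [div_le_one hx10]
    linarith
  have hber := rpow_one_add_le_one_add_mul_self hs hq0.le hq1.le
  have hrw1 : (1:ℝ) + -(1/(x+1)) = x/(x+1) := by field_simp; ring
  rw [hrw1] at hber
  -- hber : (x/(x+1))^q ≤ 1 + q * -(1/(x+1)) = 1 - q/(x+1)
  have hy0 : 0 < q/(x+1) := by positivity
  have hy1 : q/(x+1) < 1 := by
    rw [div_lt_one hx10]; linarith
  have hu : (x/(x+1)) ^ q ≤ 1 - q/(x+1) := by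
    calc (x/(x+1)) ^ q ≤ 1 + q * -(1/(x+1)) := hber
      _ = 1 - q/(x+1) := by ring
  -- invert
  have hupos : (0:ℝ) < (x/(x+1)) ^ q := Real.rpow_pos_of_pos (by positivity) _
  have hinv : 1 + q/(x+1) ≤ ((x/(x+1)) ^ q)⁻¹ := by
    rw [le_inv_comm₀ (by positivity) hupos]
    calc (x/(x+1)) ^ q ≤ 1 - q/(x+1) := hu
      _ ≤ (1 + q/(x+1))⁻¹ := by
          have h1y : (0:ℝ) < 1 + q/(x+1) := by linarith
          rw [← one_div, le_div_iff₀ h1y]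
          nlinarith
  -- x^{-q} ≥ (x+1)^{-q} + q (x+1)^{-(q+1)}
  have hxq : x ^ (-q) = (x+1) ^ (-q) * ((x/(x+1)) ^ q)⁻¹ := by
    rw [Real.div_rpow hx0.le hx10.le, Real.rpow_neg hx0.le, Real.rpow_neg hx10.le]
    field_simp
  have hstep : (x+1) ^ (-q) + q * (x+1) ^ (-(q+1)) ≤ x ^ (-q) := by
    have h1 : (x+1) ^ (-(q+1)) = (x+1) ^ (-q) / (x+1) := by
      rw [eq_div_iff hx10.ne']
      rw [← Real.rpow_add_one hx10.ne']
      congr 1; ring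
    rw [hxq, h1]
    have h2 : (x+1) ^ (-q) * (1 + q/(x+1)) ≤ (x+1) ^ (-q) * ((x/(x+1)) ^ q)⁻¹ := by
      apply mul_le_mul_of_nonneg_left hinv (Real.rpow_nonneg hx10.le _)
    calc (x+1) ^ (-q) + q * ((x+1) ^ (-q) / (x+1))
        = (x+1) ^ (-q) * (1 + q/(x+1)) := by ring
      _ ≤ _ := h2
  -- (x+1)^{-(q+1)} ≥ 2^{-(q+1)} x^{-(q+1)}
  have hcomp : 2 ^ (-(q+1)) * x ^ (-(q+1)) ≤ (x+1) ^ (-(q+1)) := by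
    rw [← Real.mul_rpow (by norm_num) hx0.le]
    exact Real.rpow_le_rpow_of_nonpos (by positivity) (by linarith) (by linarith)
  have h2pos : (0:ℝ) < (2:ℝ) ^ (q+1) := Real.rpow_pos_of_pos two_pos _
  have h2inv : (2:ℝ) ^ (-(q+1)) = ((2:ℝ) ^ (q+1))⁻¹ := Real.rpow_neg (by norm_num) _
  have hfinal : q * (2 ^ (q+1))⁻¹ * x ^ (-(q+1)) ≤ x ^ (-q) - (x+1) ^ (-q) := by
    have := hstep
    nlinarith [hcomp, h2inv ▸ hcomp, Real.rpow_nonneg hx0.le (-(q+1))]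
  rw [div_mul_eq_mul_div, le_div_iff₀ hq0]
  calc x ^ (-(q+1)) * q = (2 ^ (q+1)) * (q * (2 ^ (q+1))⁻¹ * x ^ (-(q+1))) := by
        field_simp
    _ ≤ 2 ^ (q+1) * (x ^ (-q) - (x+1) ^ (-q)) := by
        apply mul_le_mul_of_nonneg_left hfinal h2pos.le

lemma tail_bound (C ε : ℝ) (hC : 0 < C) (hε0 : 0 < ε) (hε : ε < 1/4)
    (hB : ∀ N : ℕ, 1 ≤ N → ∀ t : ℝ, ‖mE N t‖ ≤ C * (N:ℝ) ^ ((3:ℝ)/4 + ε))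
    (N M : ℕ) (hN : 1 ≤ N) (hNM : N ≤ M) (t : ℝ) :
    ‖mS M t - mS N t‖ ≤
      (C * (2 + 2 ^ ((1:ℝ)/4 - ε + 1) / ((1:ℝ)/4 - ε))) * (N:ℝ) ^ (-((1:ℝ)/4 - ε)) := by
  set q : ℝ := (1:ℝ)/4 - ε with hq
  have hq0 : 0 < q := by rw [hq]; linarith
  have hq1 : q < 1 := by rw [hq]; linarith
  have hN0 : (0:ℝ) < N := by exact_mod_cast hN
  have hNq : (0:ℝ) < (N:ℝ) ^ (-q) := Real.rpow_pos_of_pos hN0 _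
  have hKpos : 0 < C * (2 + 2 ^ (q + 1) / q) := by positivity
  rcases eq_or_lt_of_le hNM with rfl | hlt
  · simp only [sub_self, norm_zero]
    positivity
  -- split off the tail
  have hsub : Finset.Icc 1 N ⊆ Finset.Icc 1 M := Finset.Icc_subset_Icc_right hNM
  have hsplit : mS M t - mS N t = ∑ i ∈ Finset.Ioc N M, ((i:ℕ):ℂ)⁻¹ • mExp i t := by
    have h1 : Finset.Icc 1 M \ Finset.Icc 1 N = Finset.Ioc N M := by
      ext i; simp only [Finset.mem_sdiff, Finset.mem_Icc, Finset.mem_Ioc]; omega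
    rw [← h1, Finset.sum_sdiff_eq_sub hsub]
    unfold mS
    congr 1 <;> · apply Finset.sum_congr rfl; intro i _; rw [smul_eq_mul]; ring
  have hG : ∀ n : ℕ, (∑ i ∈ Finset.range (n+1), mExp i t) = mE n t := by
    intro n
    rw [Finset.range_eq_Ico, Finset.sum_eq_sum_Ico_succ_bot (Nat.succ_pos n)]
    have h0 : mExp 0 t = 0 := by simp [mExp]
    rw [h0, zero_add]
    unfold mE
    congr 1
  have habel := Finset.sum_Ioc_by_parts (fun i => ((i:ℕ):ℂ)⁻¹) (fun i => mExp i t) hlt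
  simp only [hG] at habel
  rw [hsplit, habel]
  -- three pieces
  have hpow : ∀ n : ℕ, 1 ≤ n → (n:ℝ)⁻¹ * (n:ℝ) ^ ((3:ℝ)/4 + ε) = (n:ℝ) ^ (-q) := by
    intro n hn
    have h0 : (0:ℝ) < n := by exact_mod_cast hn
    rw [← Real.rpow_neg_one (n:ℝ), ← Real.rpow_add h0]
    congr 1
    rw [hq]; ring
  have hT1 : ‖((M:ℕ):ℂ)⁻¹ • mE M t‖ ≤ C * (N:ℝ) ^ (-q) := by
    rw [norm_smul, norm_inv, Complex.norm_natCast]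
    have hM1 : 1 ≤ M := le_trans hN hNM
    have hM0 : (0:ℝ) < M := by exact_mod_cast hM1
    calc (M:ℝ)⁻¹ * ‖mE M t‖ ≤ (M:ℝ)⁻¹ * (C * (M:ℝ) ^ ((3:ℝ)/4 + ε)) :=
          mul_le_mul_of_nonneg_left (hB M hM1 t) (by positivity)
      _ = C * ((M:ℝ)⁻¹ * (M:ℝ) ^ ((3:ℝ)/4 + ε)) := by ring
      _ = C * (M:ℝ) ^ (-q) := by rw [hpow M hM1]
      _ ≤ C * (N:ℝ) ^ (-q) := by
          have hMN' : (N:ℝ) ≤ (M:ℝ) := by exact_mod_cast hNM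
          have := Real.rpow_le_rpow_of_nonpos hN0 hMN' (by linarith : -q ≤ 0)
          nlinarith
  have hT2 : ‖(((N+1:ℕ)):ℂ)⁻¹ • mE N t‖ ≤ C * (N:ℝ) ^ (-q) := by
    rw [norm_smul, norm_inv, Complex.norm_natCast]
    calc ((N+1:ℕ):ℝ)⁻¹ * ‖mE N t‖ ≤ (N:ℝ)⁻¹ * (C * (N:ℝ) ^ ((3:ℝ)/4 + ε)) := by
          have h1 : (N:ℝ)⁻¹ ≤ (N:ℝ)⁻¹ := le_refl _
          have h2 : ((N+1:ℕ):ℝ)⁻¹ ≤ (N:ℝ)⁻¹ := by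
            apply inv_anti₀ hN0
            push_cast; linarith
          apply mul_le_mul h2 (hB N hN t) (norm_nonneg _)
          positivity
      _ = C * ((N:ℝ)⁻¹ * (N:ℝ) ^ ((3:ℝ)/4 + ε)) := by ring
      _ = C * (N:ℝ) ^ (-q) := by rw [hpow N hN]
  have hT3 : ‖∑ i ∈ Finset.Ioc N (M-1),
      ((((i+1:ℕ)):ℂ)⁻¹ - ((i:ℕ):ℂ)⁻¹) • mE i t‖ ≤ C * (2 ^ (q+1) / q) * (N:ℝ) ^ (-q) := by
    calc ‖∑ i ∈ Finset.Ioc N (M-1), ((((i+1:ℕ)):ℂ)⁻¹ - ((i:ℕ):ℂ)⁻¹) • mE i t‖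
        ≤ ∑ i ∈ Finset.Ioc N (M-1), ‖((((i+1:ℕ)):ℂ)⁻¹ - ((i:ℕ):ℂ)⁻¹) • mE i t‖ :=
          norm_sum_le _ _
      _ ≤ ∑ i ∈ Finset.Ioc N (M-1),
            C * (2 ^ (q+1) / q) * ((i:ℝ) ^ (-q) - ((i:ℝ)+1) ^ (-q)) := by
          apply Finset.sum_le_sum
          intro i hi
          obtain ⟨hi1, hi2⟩ := Finset.mem_Ioc.mp hi
          have hi1' : 1 ≤ i := le_trans hN hi1.le
          have hi0 : (0:ℝ) < i := by exact_mod_cast hi1'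
          rw [norm_smul]
          have hd : ((((i+1:ℕ)):ℂ)⁻¹ - ((i:ℕ):ℂ)⁻¹) = (((((i:ℕ):ℝ)+1)⁻¹ - ((i:ℕ):ℝ)⁻¹ : ℝ) : ℂ) := by
            push_cast; ring
          have hnd : ‖(((i+1:ℕ)):ℂ)⁻¹ - ((i:ℕ):ℂ)⁻¹‖ ≤ (i:ℝ)⁻¹ * (i:ℝ)⁻¹ := by
            rw [hd, Complex.norm_real, Real.norm_eq_abs]
            have e0 : ((i:ℝ)+1)⁻¹ ≤ (i:ℝ)⁻¹ := by
              apply inv_anti₀ hi0; linarith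
            rw [abs_of_nonpos (by linarith)]
            have e1 : -( ((i:ℝ)+1)⁻¹ - (i:ℝ)⁻¹ ) = ((i:ℝ) * ((i:ℝ)+1))⁻¹ := by
              field_simp
              ring
            rw [e1, ← mul_inv]
            apply inv_anti₀ (by positivity)
            nlinarith
          calc ‖(((i+1:ℕ)):ℂ)⁻¹ - ((i:ℕ):ℂ)⁻¹‖ * ‖mE i t‖
              ≤ ((i:ℝ)⁻¹ * (i:ℝ)⁻¹) * (C * (i:ℝ) ^ ((3:ℝ)/4 + ε)) := by
                apply mul_le_mul hnd (hB i hi1' t) (norm_nonneg _) (by positivity)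
            _ = C * ((i:ℝ)⁻¹ * (i:ℝ)⁻¹ * (i:ℝ) ^ ((3:ℝ)/4 + ε)) := by ring
            _ = C * (i:ℝ) ^ (-(q+1)) := by
                have hii : (i:ℝ)⁻¹ * (i:ℝ)⁻¹ * (i:ℝ) ^ ((3:ℝ)/4 + ε) = (i:ℝ) ^ (-(q+1)) := by
                  rw [← Real.rpow_neg_one (i:ℝ), ← Real.rpow_add hi0, ← Real.rpow_add hi0]
                  congr 1
                  rw [hq]; ring
                rw [hii]
            _ ≤ C * (2 ^ (q+1) / q * ((i:ℝ) ^ (-q) - ((i:ℝ)+1) ^ (-q))) := by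
                gcongr
                exact key_rpow hq0 hq1 (by exact_mod_cast hi1')
            _ = C * (2 ^ (q+1) / q) * ((i:ℝ) ^ (-q) - ((i:ℝ)+1) ^ (-q)) := by ring
      _ = C * (2 ^ (q+1) / q) *
            ∑ i ∈ Finset.Ioc N (M-1), ((i:ℝ) ^ (-q) - ((i:ℝ)+1) ^ (-q)) := by
          rw [Finset.mul_sum]
      _ ≤ C * (2 ^ (q+1) / q) * (N:ℝ) ^ (-q) := by
          have htel : ∑ i ∈ Finset.Ioc N (M-1), ((i:ℝ) ^ (-q) - ((i:ℝ)+1) ^ (-q))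
              = ((N+1:ℕ):ℝ) ^ (-q) - ((M:ℕ):ℝ) ^ (-q) := by
            have hIoc : Finset.Ioc N (M-1) = Finset.Ico (N+1) M := by
              ext i; simp only [Finset.mem_Ioc, Finset.mem_Ico]; omega
            rw [hIoc]
            have hcast : ∀ i : ℕ, ((i:ℝ) ^ (-q) - ((i:ℝ)+1) ^ (-q))
                = (fun j : ℕ => ((j:ℕ):ℝ) ^ (-q)) i - (fun j : ℕ => ((j:ℕ):ℝ) ^ (-q)) (i+1) := by
              intro i; push_cast; ring_nf
            rw [Finset.sum_congr rfl fun i _ => hcast i]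
            rw [Finset.sum_Ico_eq_sub _ (by omega : N+1 ≤ M)]
            rw [Finset.sum_range_sub' (fun j : ℕ => ((j:ℕ):ℝ) ^ (-q)),
              Finset.sum_range_sub' (fun j : ℕ => ((j:ℕ):ℝ) ^ (-q))]
            ring
          rw [htel]
          have h1 : ((N+1:ℕ):ℝ) ^ (-q) ≤ (N:ℝ) ^ (-q) := by
            apply Real.rpow_le_rpow_of_nonpos hN0 (by push_cast; linarith) (by linarith)
          have h2 : (0:ℝ) ≤ ((M:ℕ):ℝ) ^ (-q) := Real.rpow_nonneg (by positivity) _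
          have h3 : (0:ℝ) ≤ C * (2 ^ (q+1) / q) := by positivity
          nlinarith
  calc ‖((M:ℕ):ℂ)⁻¹ • mE M t - ((N+1:ℕ):ℂ)⁻¹ • mE N t -
        ∑ i ∈ Finset.Ioc N (M-1), ((((i+1:ℕ)):ℂ)⁻¹ - ((i:ℕ):ℂ)⁻¹) • mE i t‖
      ≤ ‖((M:ℕ):ℂ)⁻¹ • mE M t - ((N+1:ℕ):ℂ)⁻¹ • mE N t‖ +
        ‖∑ i ∈ Finset.Ioc N (M-1), ((((i+1:ℕ)):ℂ)⁻¹ - ((i:ℕ):ℂ)⁻¹) • mE i t‖ :=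
        norm_sub_le _ _
    _ ≤ (‖((M:ℕ):ℂ)⁻¹ • mE M t‖ + ‖((N+1:ℕ):ℂ)⁻¹ • mE N t‖) +
        ‖∑ i ∈ Finset.Ioc N (M-1), ((((i+1:ℕ)):ℂ)⁻¹ - ((i:ℕ):ℂ)⁻¹) • mE i t‖ := by
        gcongr
        exact norm_sub_le _ _
    _ ≤ (C * (N:ℝ) ^ (-q) + C * (N:ℝ) ^ (-q)) + C * (2 ^ (q+1) / q) * (N:ℝ) ^ (-q) := by
        gcongr
    _ = (C * (2 + 2 ^ (q + 1) / q)) * (N:ℝ) ^ (-q) := by ring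

lemma mS_lip (B : ℝ) (N : ℕ) (hBd : ∀ u : ℝ, ‖mE N u‖ ≤ B) (s t : ℝ) :
    ‖mS N t - mS N s‖ ≤ (2 * Real.pi * B) * |t - s| := by
  have hnorm : ∀ x : ℝ, ‖2 * (Real.pi:ℂ) * Complex.I * mE N x‖ = 2 * Real.pi * ‖mE N x‖ := by
    intro x
    rw [norm_mul, norm_mul, norm_mul]
    simp [Complex.norm_I, Complex.norm_real, Real.norm_eq_abs,
      abs_of_nonneg Real.pi_nonneg]
  have h := Convex.norm_image_sub_le_of_norm_hasDerivWithin_le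
    (f := fun u : ℝ => mS N u) (f' := fun u : ℝ => 2 * Real.pi * Complex.I * mE N u)
    (s := Set.univ) (C := 2 * Real.pi * B)
    (fun x _ => (mS_hasDerivAt N x).hasDerivWithinAt)
    (fun x _ => by
      rw [hnorm x]
      have := hBd x
      nlinarith [Real.pi_pos])
    convex_univ (Set.mem_univ s) (Set.mem_univ t)
  simpa [Real.norm_eq_abs] using h

lemma holder_F (C ε : ℝ) (hC : 0 < C) (hε0 : 0 < ε) (hε : ε < 1/4)
    (hB : ∀ N : ℕ, 1 ≤ N → ∀ t : ℝ, ‖mE N t‖ ≤ C * (N:ℝ) ^ ((3:ℝ)/4 + ε))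
    (F : ℝ → ℂ) (hF : ∀ t : ℝ, Tendsto (fun N : ℕ => mS N t) atTop (𝓝 (F t))) :
    ∃ C' : ℝ, 0 < C' ∧ ∀ s t : ℝ, |t - s| ≤ 1 →
      ‖F t - F s‖ ≤ C' * |t - s| ^ ((1:ℝ)/4 - ε) := by
  have hq0 : 0 < (1:ℝ)/4 - ε := by linarith
  set K : ℝ := C * (2 + 2 ^ ((1:ℝ)/4 - ε + 1) / ((1:ℝ)/4 - ε)) with hK
  have hKpos : 0 < K := by rw [hK]; positivity
  have hFtail : ∀ N : ℕ, 1 ≤ N → ∀ t : ℝ, ‖F t - mS N t‖ ≤ K * (N:ℝ) ^ (-((1:ℝ)/4 - ε)) := by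
    intro N hN t
    have h1 : Tendsto (fun M : ℕ => ‖mS M t - mS N t‖) atTop (𝓝 ‖F t - mS N t‖) :=
      ((hF t).sub tendsto_const_nhds).norm
    apply le_of_tendsto h1
    filter_upwards [eventually_ge_atTop N] with M hM
    exact tail_bound C ε hC hε0 hε hB N M hN hM t
  refine ⟨2*K + 2*Real.pi*C * 2 ^ ((3:ℝ)/4+ε), by positivity, ?_⟩
  intro s t hts
  by_cases h0 : t = s
  · subst h0
    rw [sub_self, norm_zero, sub_self, abs_zero, Real.zero_rpow hq0.ne', mul_zero]
  have hpos : 0 < |t - s| := abs_pos.mpr (sub_ne_zero.mpr h0)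
  set h : ℝ := |t - s| with hh
  have h1h : 1 ≤ 1/h := by rw [le_div_iff₀ hpos]; linarith
  set N : ℕ := ⌈1/h⌉₊ with hNdef
  have hN1 : 1 ≤ N := Nat.one_le_ceil_iff.mpr (by positivity)
  have hNlb : 1/h ≤ (N:ℝ) := Nat.le_ceil _
  have hN0 : (0:ℝ) < N := by exact_mod_cast hN1
  have hNub : (N:ℝ) ≤ 2/h := by
    have h2 := (Nat.ceil_lt_add_one (by positivity : (0:ℝ) ≤ 1/h)).le
    calc (N:ℝ) ≤ 1/h + 1 := h2
      _ ≤ 1/h + 1/h := by linarith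
      _ = 2/h := by ring
  have hb1 : (N:ℝ) ^ (-((1:ℝ)/4 - ε)) ≤ h ^ ((1:ℝ)/4 - ε) := by
    calc (N:ℝ) ^ (-((1:ℝ)/4 - ε)) ≤ (1/h) ^ (-((1:ℝ)/4 - ε)) :=
          Real.rpow_le_rpow_of_nonpos (by positivity) hNlb (by linarith)
      _ = h ^ ((1:ℝ)/4 - ε) := by
          rw [one_div, Real.inv_rpow hpos.le, Real.rpow_neg hpos.le, inv_inv]
  have hb2 : (N:ℝ) ^ ((3:ℝ)/4 + ε) * h ≤ 2 ^ ((3:ℝ)/4+ε) * h ^ ((1:ℝ)/4 - ε) := by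
    calc (N:ℝ) ^ ((3:ℝ)/4 + ε) * h ≤ (2/h) ^ ((3:ℝ)/4 + ε) * h :=
          mul_le_mul_of_nonneg_right
            (Real.rpow_le_rpow hN0.le hNub (by linarith)) hpos.le
      _ = 2 ^ ((3:ℝ)/4+ε) * (h / h ^ ((3:ℝ)/4 + ε)) := by
          rw [Real.div_rpow (by norm_num) hpos.le]
          ring
      _ = 2 ^ ((3:ℝ)/4+ε) * h ^ ((1:ℝ)/4 - ε) := by
          congr 1
          have := Real.rpow_sub hpos 1 ((3:ℝ)/4 + ε)
          rw [Real.rpow_one] at this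
          rw [← this]
          ring_nf
  have hLip := mS_lip (C * (N:ℝ) ^ ((3:ℝ)/4 + ε)) N (fun u => hB N hN1 u) s t
  have htri : ‖F t - F s‖ ≤ ‖F t - mS N t‖ + ‖mS N t - mS N s‖ + ‖mS N s - F s‖ := by
    have hdec : F t - F s = (F t - mS N t) + (mS N t - mS N s) + (mS N s - F s) := by ring
    rw [hdec]
    exact norm_add₃_le
  have hb3 : ‖mS N s - F s‖ ≤ K * (N:ℝ) ^ (-((1:ℝ)/4 - ε)) := by
    rw [norm_sub_rev]; exact hFtail N hN1 s
  calc ‖F t - F s‖ ≤ ‖F t - mS N t‖ + ‖mS N t - mS N s‖ + ‖mS N s - F s‖ := htri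
    _ ≤ K * (N:ℝ) ^ (-((1:ℝ)/4 - ε)) + (2 * Real.pi * (C * (N:ℝ) ^ ((3:ℝ)/4 + ε))) * h
        + K * (N:ℝ) ^ (-((1:ℝ)/4 - ε)) :=
        add_le_add (add_le_add (hFtail N hN1 t) hLip) hb3
    _ ≤ K * h ^ ((1:ℝ)/4 - ε) + (2 * Real.pi * C) * (2 ^ ((3:ℝ)/4+ε) * h ^ ((1:ℝ)/4 - ε))
        + K * h ^ ((1:ℝ)/4 - ε) := by
        have hK1 : K * (N:ℝ) ^ (-((1:ℝ)/4 - ε)) ≤ K * h ^ ((1:ℝ)/4 - ε) :=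
          mul_le_mul_of_nonneg_left hb1 hKpos.le
        have hmid : (2 * Real.pi * (C * (N:ℝ) ^ ((3:ℝ)/4 + ε))) * h
            ≤ (2 * Real.pi * C) * (2 ^ ((3:ℝ)/4+ε) * h ^ ((1:ℝ)/4 - ε)) := by
          calc (2 * Real.pi * (C * (N:ℝ) ^ ((3:ℝ)/4 + ε))) * h
              = (2 * Real.pi * C) * ((N:ℝ) ^ ((3:ℝ)/4 + ε) * h) := by ring
            _ ≤ (2 * Real.pi * C) * (2 ^ ((3:ℝ)/4+ε) * h ^ ((1:ℝ)/4 - ε)) := by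
                have hppos : (0:ℝ) < 2 * Real.pi * C := by positivity
                exact mul_le_mul_of_nonneg_left hb2 hppos.le
        exact add_le_add (add_le_add hK1 hmid) hK1
    _ = (2*K + 2*Real.pi*C * 2 ^ ((3:ℝ)/4+ε)) * h ^ ((1:ℝ)/4 - ε) := by ring

lemma graph_dim_le_main (F : ℝ → ℂ) (g : ℝ → ℝ)
    (hg : ∀ s t : ℝ, |g t - g s| ≤ ‖F t - F s‖)
    (hH : ∀ ε : ℝ, 0 < ε → ε < 1/4 → ∃ C' : ℝ, 0 < C' ∧ ∀ s t : ℝ, |t - s| ≤ 1 →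
      ‖F t - F s‖ ≤ C' * |t - s| ^ ((1:ℝ)/4 - ε)) :
    dimH {q : ℝ × ℝ | q.1 ∈ Set.Icc (0:ℝ) 1 ∧ q.2 = g q.1} ≤ ENNReal.ofReal (7/4) := by
  apply ENNReal.le_of_forall_pos_le_add
  intro δ hδ _
  have hδ' : (0:ℝ) < (δ:ℝ) := hδ
  set ε : ℝ := min ((δ:ℝ)/2) (1/8) with hεdef
  have hε0 : 0 < ε := lt_min (by linarith) (by norm_num)
  have hε14 : ε < 1/4 := lt_of_le_of_lt (min_le_right _ _) (by norm_num)
  obtain ⟨C', hC', hbd⟩ := hH ε hε0 hε14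
  have hdim := graph_dimH_le g (1/4 - ε) C' (by linarith) (by linarith) hC' ?_
  · refine hdim.trans ?_
    have h1 : (2:ℝ) - (1/4 - ε) = 7/4 + ε := by ring
    rw [h1, ENNReal.ofReal_add (by norm_num) hε0.le]
    gcongr
    calc ENNReal.ofReal ε ≤ ENNReal.ofReal ((δ:ℝ)) :=
          ENNReal.ofReal_le_ofReal (le_trans (min_le_left _ _) (by linarith))
      _ = (δ : ℝ≥0∞) := ENNReal.ofReal_coe_nnreal
  · intro s hs t ht
    have habs : |t - s| ≤ 1 := by
      rw [abs_le]
      constructor <;> linarith [hs.1, hs.2, ht.1, ht.2]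
    exact (hg s t).trans (hbd s t habs)

open Filter Finset Topology in
/-- Assuming the (GRH-conditional) bound
`|∑_{1 ≤ n ≤ x} μ(n) e^{2πint}| ≤ C_ε x^{3/4+ε}` for every `ε > 0`, the Hausdorff
dimensions of the graphs of `|F(μ;·)|`, `Re F(μ;·)`, `Im F(μ;·)` over `[0,1]` are each
at most `7/4`. -/
theorem stmt_16
    (hS : ∀ ε : ℝ, 0 < ε → ∃ Cε : ℝ, 0 < Cε ∧ ∀ x : ℝ, 1 ≤ x → ∀ t : ℝ,
      ‖∑ n ∈ Finset.Icc 1 ⌊x⌋₊,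
        (ArithmeticFunction.moebius n : ℂ) *
          Complex.exp (2 * Real.pi * Complex.I * (n : ℂ) * (t : ℂ))‖
        ≤ Cε * x ^ ((3 : ℝ) / 4 + ε))
    (F : ℝ → ℂ)
    (hF : ∀ t : ℝ, Tendsto (fun N : ℕ => ∑ n ∈ Finset.Icc 1 N,
        (ArithmeticFunction.moebius n : ℂ) *
          Complex.exp (2 * Real.pi * Complex.I * (n : ℂ) * (t : ℂ)) / (n : ℂ))
      atTop (𝓝 (F t))) :
    dimH {q : ℝ × ℝ | q.1 ∈ Set.Icc (0 : ℝ) 1 ∧ q.2 = ‖F q.1‖}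
        ≤ ENNReal.ofReal (7 / 4) ∧
    dimH {q : ℝ × ℝ | q.1 ∈ Set.Icc (0 : ℝ) 1 ∧ q.2 = (F q.1).re}
        ≤ ENNReal.ofReal (7 / 4) ∧
    dimH {q : ℝ × ℝ | q.1 ∈ Set.Icc (0 : ℝ) 1 ∧ q.2 = (F q.1).im}
        ≤ ENNReal.ofReal (7 / 4) := by
  have hF' : ∀ t : ℝ, Tendsto (fun N : ℕ => mS N t) atTop (𝓝 (F t)) := hF
  have hH : ∀ ε : ℝ, 0 < ε → ε < 1/4 → ∃ C' : ℝ, 0 < C' ∧ ∀ s t : ℝ, |t - s| ≤ 1 →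
      ‖F t - F s‖ ≤ C' * |t - s| ^ ((1:ℝ)/4 - ε) := by
    intro ε hε0 hε14
    obtain ⟨C, hC0, hSC⟩ := hS ε hε0
    have hB : ∀ N : ℕ, 1 ≤ N → ∀ t : ℝ, ‖mE N t‖ ≤ C * (N:ℝ) ^ ((3:ℝ)/4 + ε) := by
      intro N hN t
      have h1 := hSC (N:ℝ) (by exact_mod_cast hN) t
      rw [Nat.floor_natCast] at h1
      exact h1
    exact holder_F C ε hC0 hε0 hε14 hB F hF'
  refine ⟨?_, ?_, ?_⟩
  · exact graph_dim_le_main F (fun u => ‖F u‖)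
      (fun s t => by
        exact abs_norm_sub_norm_le _ _) hH
  · exact graph_dim_le_main F (fun u => (F u).re)
      (fun s t => by
        have h1 : (F t).re - (F s).re = (F t - F s).re := by simp [Complex.sub_re]
        rw [h1]
        exact (Complex.abs_re_le_norm _)) hH
  · exact graph_dim_le_main F (fun u => (F u).im)
      (fun s t => by
        have h1 : (F t).im - (F s).im = (F t - F s).im := by simp [Complex.sub_im]
        rw [h1]
        exact (Complex.abs_im_le_norm _)) hH
end

section
/- Let μ denote the Möbius function, and let k ≥ 2 be an integer. Suppose that for every ε > 0 there exists a constant C_ε > 0 such that |Σ_{1 ≤ n ≤ x} μ(n)e^{2πi n^k t}| ≤ C_ε·x^{1 − 2^{1−2k} + ε} for all real x ≥ 1 and all t ∈ ℝ (this estimate holds under the Generalized Riemann Hypothesis). Then the series F_{k,k}(μ;t) = Σ_{n=1}^∞ μ(n)e^{2πi n^k t}/n^k converges for every t ∈ ℝ, and for every ε with 0 < ε < 1 − (1 − 2^{1−2k})/k the function F_{k,k}(μ;·) is Hölder continuous with exponent 1 − (1 − 2^{1−2k})/k − ε; the same Hölder estimate holds for t ↦ |F_{k,k}(μ;t)|,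 t ↦ Re F_{k,k}(μ;t), and t ↦ Im F_{k,k}(μ;t). -/
open Filter Finset Topology
set_option maxHeartbeats 1000000

namespace Stmt17

noncomputable def a (k : ℕ) (t : ℝ) (n : ℕ) : ℂ :=
  (ArithmeticFunction.moebius n : ℂ) *
    Complex.exp (2 * Real.pi * Complex.I * ((n : ℂ) ^ k) * (t : ℂ))

noncomputable def f (k : ℕ) (t : ℝ) (n : ℕ) : ℂ := a k t n / ((n : ℂ) ^ k)

noncomputable def S (k : ℕ) (t : ℝ) (N : ℕ) : ℂ := ∑ n ∈ Finset.Icc 1 N, a k t n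

noncomputable def G (k : ℕ) (t : ℝ) (N : ℕ) : ℂ := ∑ n ∈ Finset.Icc 1 N, f k t n

lemma a_zero (k : ℕ) (t : ℝ) : a k t 0 = 0 := by simp [a]

lemma f_zero (k : ℕ) (t : ℝ) : f k t 0 = 0 := by simp [f, a_zero]

lemma norm_a_le_one (k : ℕ) (t : ℝ) (n : ℕ) : ‖a k t n‖ ≤ 1 := by
  have h1 : ‖(ArithmeticFunction.moebius n : ℂ)‖ ≤ 1 := by
    rw [show ((ArithmeticFunction.moebius n : ℤ) : ℂ) = ((ArithmeticFunction.moebius n : ℤ) : ℝ) by push_cast; ring]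
    rw [Complex.norm_real, Real.norm_eq_abs, ← Int.cast_abs]
    exact_mod_cast ArithmeticFunction.abs_moebius_le_one
  have h2 : ‖Complex.exp (2 * Real.pi * Complex.I * ((n : ℂ) ^ k) * (t : ℂ))‖ = 1 := by
    have : (2 * (Real.pi : ℂ) * Complex.I * ((n : ℂ) ^ k) * (t : ℂ))
        = ((2 * Real.pi * (n : ℝ) ^ k * t : ℝ) : ℂ) * Complex.I := by push_cast; ring
    rw [this, Complex.norm_exp_ofReal_mul_I]
  calc ‖a k t n‖ = ‖(ArithmeticFunction.moebius n : ℂ)‖ *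
      ‖Complex.exp (2 * Real.pi * Complex.I * ((n : ℂ) ^ k) * (t : ℂ))‖ := norm_mul _ _
    _ ≤ 1 * 1 := by exact mul_le_mul h1 (le_of_eq h2) (norm_nonneg _) zero_le_one
    _ = 1 := one_mul 1

lemma norm_f_le (k : ℕ) (t : ℝ) (n : ℕ) : ‖f k t n‖ ≤ 1 / (n : ℝ) ^ k := by
  have hnorm : ‖((n:ℂ)) ^ k‖ = (n : ℝ) ^ k := by rw [norm_pow]; norm_num
  rcases Nat.eq_zero_or_pos n with h | h
  · subst h; rw [f_zero, norm_zero]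
    positivity
  · have hn : (0:ℝ) < (n:ℝ) ^ k := by positivity
    rw [f, norm_div, hnorm, div_le_div_iff₀ hn hn]
    have := norm_a_le_one k t n
    nlinarith [norm_nonneg (a k t n), hn]

end Stmt17
namespace Stmt17

lemma norm_f_le_sq (k : ℕ) (hk : 2 ≤ k) (t : ℝ) (n : ℕ) : ‖f k t n‖ ≤ 1 / (n : ℝ) ^ 2 := by
  rcases Nat.eq_zero_or_pos n with h | h
  · subst h; rw [f_zero, norm_zero]; norm_num
  · refine (norm_f_le k t n).trans ?_
    have h1 : (1:ℝ) ≤ (n:ℝ) := by exact_mod_cast h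
    exact one_div_le_one_div_of_le (by positivity) (pow_le_pow_right₀ h1 hk)

lemma summable_f (k : ℕ) (hk : 2 ≤ k) (t : ℝ) : Summable (f k t) := by
  refine Summable.of_norm_bounded ?_ (norm_f_le_sq k hk t)
  exact (Real.summable_one_div_nat_pow).2 one_lt_two

noncomputable def F (k : ℕ) (t : ℝ) : ℂ := ∑' n, f k t n

lemma G_eq_range (k : ℕ) (t : ℝ) (N : ℕ) :
    G k t N = ∑ n ∈ Finset.range (N + 1), f k t n := by
  refine Finset.sum_subset ?_ ?_
  · intro x hx
    simp only [Finset.mem_Icc] at hx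
    exact Finset.mem_range.2 (Nat.lt_succ_of_le hx.2)
  · intro x hxr hx
    simp only [Finset.mem_Icc, not_and, not_le] at hx
    have hx0 : x = 0 := by
      rcases Nat.eq_zero_or_pos x with h | h
      · exact h
      · exact absurd (hx h) (by have := Finset.mem_range.1 hxr; omega)
    subst hx0; exact f_zero k t

lemma tendsto_G (k : ℕ) (hk : 2 ≤ k) (t : ℝ) :
    Tendsto (G k t) atTop (𝓝 (F k t)) := by
  have h := (summable_f k hk t).hasSum.tendsto_sum_nat
  have h2 := h.comp (tendsto_add_atTop_nat 1)
  convert h2 using 1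
  funext N
  exact G_eq_range k t N
  rfl

end Stmt17
namespace Stmt17

lemma pow_succ_le_aux (n j : ℕ) : (n+1)^(j+1) ≤ n^(j+1) + (j+1)*(n+1)^j := by
  induction j with
  | zero => simp
  | succ j ih =>
    have h1 : (n+1)^(j+2) = (n+1) * (n+1)^(j+1) := by ring
    have h2 : (n+1) * (n+1)^(j+1) ≤ (n+1) * (n^(j+1) + (j+1)*(n+1)^j) :=
      Nat.mul_le_mul_left _ ih
    have h3 : n^(j+1) ≤ (n+1)^(j+1) := Nat.pow_le_pow_left (Nat.le_succ n) _
    calc (n+1)^(j+2) ≤ (n+1) * (n^(j+1) + (j+1)*(n+1)^j) := by rw [h1]; exact h2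
      _ = n^(j+2) + n^(j+1) + (j+1)*(n+1)^(j+1) := by ring
      _ ≤ n^(j+2) + (n+1)^(j+1) + (j+1)*(n+1)^(j+1) := by omega
      _ = n^(j+2) + (j+2)*(n+1)^(j+1) := by ring

lemma b_diff_le (k : ℕ) (hk : 1 ≤ k) (n : ℕ) (hn : 1 ≤ n) :
    1/(n:ℝ)^k - 1/((n:ℝ)+1)^k ≤ k / (n:ℝ)^(k+1) := by
  obtain ⟨j, rfl⟩ : ∃ j, k = j + 1 := ⟨k - 1, by omega⟩
  have hn0 : (0:ℝ) < (n:ℝ) := by exact_mod_cast hn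
  have hA : (0:ℝ) < (n:ℝ)^(j+1) := by positivity
  have hB : (0:ℝ) < ((n:ℝ)+1)^(j+1) := by positivity
  have hcast : ((n:ℝ)+1)^(j+1) ≤ (n:ℝ)^(j+1) + (j+1)*((n:ℝ)+1)^j := by
    have := pow_succ_le_aux n j
    have h2 : (((n+1)^(j+1) : ℕ) : ℝ) ≤ ((n^(j+1) + (j+1)*(n+1)^j : ℕ) : ℝ) := by
      exact_mod_cast this
    push_cast at h2
    convert h2 using 2 <;> push_cast <;> ring
  have h1 : 1/(n:ℝ)^(j+1) - 1/((n:ℝ)+1)^(j+1)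
      = (((n:ℝ)+1)^(j+1) - (n:ℝ)^(j+1)) / ((n:ℝ)^(j+1) * ((n:ℝ)+1)^(j+1)) := by
    rw [div_sub_div _ _ hA.ne' hB.ne']
    ring_nf
  rw [h1]
  push_cast
  calc (((n:ℝ)+1)^(j+1) - (n:ℝ)^(j+1)) / ((n:ℝ)^(j+1) * ((n:ℝ)+1)^(j+1))
      ≤ (((j:ℝ)+1)*((n:ℝ)+1)^j) / ((n:ℝ)^(j+1) * ((n:ℝ)+1)^(j+1)) := by
        gcongr
        push_cast at hcast
        linarith [hcast]
    _ = ((j:ℝ)+1) / ((n:ℝ)^(j+1) * ((n:ℝ)+1)) := by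
        rw [pow_succ ((n:ℝ)+1) j]
        field_simp
    _ ≤ ((j:ℝ)+1) / ((n:ℝ)^(j+1) * (n:ℝ)) := by
        rw [div_le_div_iff₀ (by positivity) (by positivity)]
        have : (n:ℝ) ≤ (n:ℝ)+1 := by linarith
        nlinarith [hA, hn0]
    _ = ((j:ℝ)+1) / (n:ℝ)^(j+1+1) := by ring

end Stmt17
namespace Stmt17

lemma sum_inv_sq_le (N : ℕ) (hN : 1 ≤ N) : ∀ M, N ≤ M →
    ∑ n ∈ Finset.Ioc N M, 1/(n:ℝ)^2 ≤ 1/(N:ℝ) - 1/(M:ℝ) := by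
  intro M hM
  induction M, hM using Nat.le_induction with
  | base => simp
  | succ M hM ih =>
    rw [Finset.sum_Ioc_succ_top (by omega)]
    have hM1 : (1:ℝ) ≤ (M:ℝ) := by exact_mod_cast le_trans hN hM
    have h1 : 1/((M:ℝ)+1)^2 ≤ 1/(M:ℝ) - 1/((M:ℝ)+1) := by
      rw [div_sub_div _ _ (by linarith) (by linarith : (M:ℝ)+1 ≠ 0)]
      rw [div_le_div_iff₀ (by positivity) (by positivity)]
      ring_nf
      nlinarith
    push_cast
    linarith [ih]

lemma S_succ (k : ℕ) (t : ℝ) (n : ℕ) (hn : 1 ≤ n) :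
    S k t n = S k t (n-1) + a k t n := by
  obtain ⟨m, rfl⟩ : ∃ m, n = m + 1 := ⟨n - 1, by omega⟩
  simp only [S, Nat.add_sub_cancel]
  rw [← Finset.sum_Icc_succ_top (by omega : 1 ≤ m + 1)]

lemma abel_identity (k : ℕ) (t : ℝ) (b : ℕ → ℂ) (N : ℕ) : ∀ M, N ≤ M →
    ∑ n ∈ Finset.Ioc N M, a k t n * b n
      = S k t M * b (M+1) - S k t N * b (N+1)
        + ∑ n ∈ Finset.Ioc N M, S k t n * (b n - b (n+1)) := by
  intro M hM
  induction M, hM using Nat.le_induction with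
  | base => simp
  | succ M hM ih =>
    rw [Finset.sum_Ioc_succ_top (by omega), Finset.sum_Ioc_succ_top (by omega), ih]
    have h := S_succ k t (M+1) (by omega)
    simp only [Nat.add_sub_cancel] at h
    rw [h]
    ring

end Stmt17
namespace Stmt17

lemma rpow_anti {N n : ℕ} (hN : 1 ≤ N) (hn : N ≤ n) {c : ℝ} (hc : c ≤ 0) :
    (n:ℝ) ^ c ≤ (N:ℝ) ^ c := by
  have hNpos : (0:ℝ) < (N:ℝ) := by exact_mod_cast hN
  exact Real.rpow_le_rpow_of_nonpos hNpos (by exact_mod_cast hn) hc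

lemma tail_bound (k : ℕ) (hk : 2 ≤ k) (t : ℝ) (C θ : ℝ) (hC : 0 < C)
    (hθ0 : 0 < θ) (hθ1 : θ ≤ 1)
    (hbound : ∀ n : ℕ, 1 ≤ n → ‖S k t n‖ ≤ C * (n:ℝ) ^ θ)
    (N M : ℕ) (hN : 1 ≤ N) (hM : N ≤ M) :
    ‖∑ n ∈ Finset.Ioc N M, f k t n‖ ≤ C * (k + 2) * (N:ℝ) ^ (θ - k) := by
  have hNpos : (0:ℝ) < (N:ℝ) := by exact_mod_cast hN
  have hθk : θ - (k:ℝ) ≤ 0 := by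
    have : (2:ℝ) ≤ (k:ℝ) := by exact_mod_cast hk
    linarith
  have hθk1 : θ - (k:ℝ) + 1 ≤ 0 := by
    have : (2:ℝ) ≤ (k:ℝ) := by exact_mod_cast hk
    linarith
  set b : ℕ → ℂ := fun n => ((1/(n:ℝ)^k : ℝ) : ℂ) with hb
  have hfb : ∀ n ∈ Finset.Ioc N M, f k t n = a k t n * b n := by
    intro n hn
    rw [f]
    show a k t n / ((n:ℂ))^k = a k t n * ((1/(n:ℝ)^k : ℝ) : ℂ)
    have : ((1/(n:ℝ)^k : ℝ) : ℂ) = 1 / ((n:ℂ))^k := by push_cast; ring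
    rw [this, mul_one_div]
  rw [Finset.sum_congr rfl hfb, abel_identity k t b N M hM]
  -- bound on ‖S n‖ at a natural number point, via rpow algebra
  have hSn : ∀ n : ℕ, N ≤ n → ‖S k t n * b (n+1)‖ ≤ C * (N:ℝ) ^ (θ - k) := by
    intro n hn
    have hn1 : 1 ≤ n := le_trans hN hn
    have hnpos : (0:ℝ) < (n:ℝ) := by exact_mod_cast hn1
    have hbnorm : ‖b (n+1)‖ = 1/((n:ℝ)+1)^k := by
      rw [hb]
      simp only [Complex.norm_real, Real.norm_eq_abs]
      rw [abs_of_nonneg (by positivity)]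
      push_cast
      ring
    rw [norm_mul, hbnorm]
    calc ‖S k t n‖ * (1/((n:ℝ)+1)^k)
        ≤ (C * (n:ℝ)^θ) * (1/(n:ℝ)^k) := by
          have hpow : (n:ℝ)^k ≤ ((n:ℝ)+1)^k :=
            pow_le_pow_left₀ (le_of_lt hnpos) (by linarith) k
          apply mul_le_mul (hbound n hn1) ?_ (by positivity) (by positivity)
          exact one_div_le_one_div_of_le (by positivity) hpow
      _ = C * (n:ℝ)^(θ - k) := by
          rw [Real.rpow_sub hnpos, ← Real.rpow_natCast (n:ℝ) k]
          ring
      _ ≤ C * (N:ℝ)^(θ - k) := by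
          have := rpow_anti hN hn hθk
          nlinarith
  -- middle sum bound
  have hmid : ‖∑ n ∈ Finset.Ioc N M, S k t n * (b n - b (n+1))‖
      ≤ C * k * (N:ℝ) ^ (θ - k) := by
    have hterm : ∀ n ∈ Finset.Ioc N M, ‖S k t n * (b n - b (n+1))‖
        ≤ (C * k * (N:ℝ)^(θ - k + 1)) * (1/(n:ℝ)^2) := by
      intro n hn
      obtain ⟨hn1, _⟩ := Finset.mem_Ioc.1 hn
      have hn1' : 1 ≤ n := le_trans hN (le_of_lt hn1)
      have hnpos : (0:ℝ) < (n:ℝ) := by exact_mod_cast hn1'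
      have hdiff : ‖b n - b (n+1)‖ = 1/(n:ℝ)^k - 1/((n:ℝ)+1)^k := by
        rw [hb]
        have hc : ((1/(n:ℝ)^k : ℝ) : ℂ) - ((1/((n+1:ℕ):ℝ)^k : ℝ) : ℂ)
            = (((1/(n:ℝ)^k - 1/((n:ℝ)+1)^k) : ℝ) : ℂ) := by push_cast; ring
        have hpow : (n:ℝ)^k ≤ ((n:ℝ)+1)^k :=
          pow_le_pow_left₀ (le_of_lt hnpos) (by linarith) k
        rw [hc, Complex.norm_real, Real.norm_eq_abs, abs_of_nonneg]
        exact sub_nonneg.2 (one_div_le_one_div_of_le (by positivity) hpow)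
      rw [norm_mul, hdiff]
      calc ‖S k t n‖ * (1/(n:ℝ)^k - 1/((n:ℝ)+1)^k)
          ≤ (C * (n:ℝ)^θ) * ((k:ℝ)/(n:ℝ)^(k+1)) := by
            have hpow : (n:ℝ)^k ≤ ((n:ℝ)+1)^k :=
              pow_le_pow_left₀ (le_of_lt hnpos) (by linarith) k
            apply mul_le_mul (hbound n hn1') (b_diff_le k (by omega) n hn1') ?_ (by positivity)
            have := one_div_le_one_div_of_le (by positivity : (0:ℝ) < (n:ℝ)^k) hpow
            linarith
        _ = (C * k * (n:ℝ)^(θ - k + 1)) * ((n:ℝ)^(-2 : ℝ)) := by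
            have e1 : (n:ℝ)^θ * (((n:ℝ)^(k+1))⁻¹) = (n:ℝ)^(θ - (k:ℝ) - 1) := by
              rw [← Real.rpow_natCast (n:ℝ) (k+1), ← Real.rpow_neg (le_of_lt hnpos),
                ← Real.rpow_add hnpos]
              rw [show θ + -(((k+1 : ℕ)):ℝ) = θ - (k:ℝ) - 1 by push_cast; ring]
            have e2 : (n:ℝ)^(θ - (k:ℝ) + 1) * ((n:ℝ)^(-2:ℝ)) = (n:ℝ)^(θ - (k:ℝ) - 1) := by
              rw [← Real.rpow_add hnpos]
              rw [show θ - (k:ℝ) + 1 + (-2) = θ - (k:ℝ) - 1 by ring]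
            calc C * (n:ℝ)^θ * ((k:ℝ)/(n:ℝ)^(k+1))
                = C * k * ((n:ℝ)^θ * (((n:ℝ)^(k+1))⁻¹)) := by ring
              _ = C * k * (n:ℝ)^(θ - (k:ℝ) - 1) := by rw [e1]
              _ = C * k * ((n:ℝ)^(θ - (k:ℝ) + 1) * ((n:ℝ)^(-2:ℝ))) := by rw [e2]
              _ = (C * k * (n:ℝ)^(θ - k + 1)) * ((n:ℝ)^(-2 : ℝ)) := by ring
        _ ≤ (C * k * (N:ℝ)^(θ - k + 1)) * ((n:ℝ)^(-2 : ℝ)) := by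
            have h1 := rpow_anti hN (le_of_lt hn1) hθk1
            gcongr
        _ = (C * k * (N:ℝ)^(θ - k + 1)) * (1/(n:ℝ)^2) := by
            rw [Real.rpow_neg (le_of_lt hnpos), ← Real.rpow_natCast (n:ℝ) 2]
            push_cast
            rw [one_div]
    calc ‖∑ n ∈ Finset.Ioc N M, S k t n * (b n - b (n+1))‖
        ≤ ∑ n ∈ Finset.Ioc N M, ‖S k t n * (b n - b (n+1))‖ := norm_sum_le _ _
      _ ≤ ∑ n ∈ Finset.Ioc N M, (C * k * (N:ℝ)^(θ - k + 1)) * (1/(n:ℝ)^2) :=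
          Finset.sum_le_sum hterm
      _ = (C * k * (N:ℝ)^(θ - k + 1)) * ∑ n ∈ Finset.Ioc N M, 1/(n:ℝ)^2 := by
          rw [Finset.mul_sum]
      _ ≤ (C * k * (N:ℝ)^(θ - k + 1)) * (1/(N:ℝ)) := by
          have h1 := sum_inv_sq_le N hN M hM
          have h2 : ∑ n ∈ Finset.Ioc N M, 1/(n:ℝ)^2 ≤ 1/(N:ℝ) := by
            have hMpos : (0:ℝ) < (M:ℝ) := by
              have : 1 ≤ M := le_trans hN hM
              exact_mod_cast this
            have : (0:ℝ) ≤ 1/(M:ℝ) := by positivity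
            linarith
          have h3 : (0:ℝ) ≤ C * k * (N:ℝ)^(θ - k + 1) := by
            have := Real.rpow_nonneg (le_of_lt hNpos) (θ - k + 1)
            positivity
          exact mul_le_mul_of_nonneg_left h2 h3
      _ = C * k * (N:ℝ)^(θ - k) := by
          rw [one_div, ← Real.rpow_neg_one (N:ℝ), mul_assoc, ← Real.rpow_add hNpos]
          rw [show θ - (k:ℝ) + 1 + (-1) = θ - (k:ℝ) by ring]
  calc ‖S k t M * b (M+1) - S k t N * b (N+1)
        + ∑ n ∈ Finset.Ioc N M, S k t n * (b n - b (n+1))‖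
      ≤ ‖S k t M * b (M+1)‖ + ‖S k t N * b (N+1)‖
        + ‖∑ n ∈ Finset.Ioc N M, S k t n * (b n - b (n+1))‖ := by
        refine le_trans (norm_add_le _ _) ?_
        have := norm_sub_le (S k t M * b (M+1)) (S k t N * b (N+1))
        linarith
    _ ≤ C * (N:ℝ)^(θ - k) + C * (N:ℝ)^(θ - k) + C * k * (N:ℝ)^(θ - k) := by
        have h1 := hSn M hM
        have h2 := hSn N le_rfl
        linarith
    _ = C * (k + 2) * (N:ℝ)^(θ - k) := by ring

end Stmt17
namespace Stmt17

lemma Icc_one_eq_Ioc_zero (N : ℕ) : Finset.Icc 1 N = Finset.Ioc 0 N := by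
  rw [← Finset.Icc_add_one_left_eq_Ioc, zero_add]

lemma G_sub_G (k : ℕ) (t : ℝ) (N M : ℕ) (h : N ≤ M) :
    G k t M - G k t N = ∑ n ∈ Finset.Ioc N M, f k t n := by
  rw [G, G, Icc_one_eq_Ioc_zero, Icc_one_eq_Ioc_zero,
    ← Finset.sum_Ioc_consecutive (f k t) (Nat.zero_le N) h]
  exact add_sub_cancel_left _ _

lemma norm_G_le (k : ℕ) (hk : 2 ≤ k) (t : ℝ) (N : ℕ) : ‖G k t N‖ ≤ 2 := by
  rcases Nat.eq_zero_or_pos N with h | h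
  · subst h; simp [G]
  · calc ‖G k t N‖ ≤ ∑ n ∈ Finset.Icc 1 N, ‖f k t n‖ := norm_sum_le _ _
      _ ≤ ∑ n ∈ Finset.Icc 1 N, 1/(n:ℝ)^2 := Finset.sum_le_sum fun n _ => norm_f_le_sq k hk t n
      _ ≤ 2 := by
        rw [Icc_one_eq_Ioc_zero,
          ← Finset.sum_Ioc_consecutive (fun n : ℕ => 1/(n:ℝ)^2) (Nat.zero_le 1) h]
        have h1 : ∑ n ∈ Finset.Ioc (0:ℕ) 1, (1:ℝ)/(n:ℝ)^2 = 1 := by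
          have he : Finset.Ioc (0:ℕ) 1 = {1} := rfl
          rw [he]
          norm_num
        have h2 := sum_inv_sq_le 1 le_rfl N h
        have h3 : (0:ℝ) ≤ ((N:ℝ))⁻¹ := by positivity
        rw [h1]
        norm_num at h2 ⊢
        linarith

lemma norm_F_le (k : ℕ) (hk : 2 ≤ k) (t : ℝ) : ‖F k t‖ ≤ 2 := by
  have h := (tendsto_G k hk t).norm
  exact le_of_tendsto h (Filter.Eventually.of_forall (norm_G_le k hk t))

lemma norm_F_sub_G_le (k : ℕ) (hk : 2 ≤ k) (t : ℝ) (C θ : ℝ) (hC : 0 < C)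
    (hθ0 : 0 < θ) (hθ1 : θ ≤ 1)
    (hbound : ∀ n : ℕ, 1 ≤ n → ‖S k t n‖ ≤ C * (n:ℝ) ^ θ)
    (N : ℕ) (hN : 1 ≤ N) :
    ‖F k t - G k t N‖ ≤ C * (k + 2) * (N:ℝ) ^ (θ - k) := by
  have htend : Tendsto (fun M => G k t M - G k t N) atTop (𝓝 (F k t - G k t N)) :=
    (tendsto_G k hk t).sub_const _
  refine le_of_tendsto htend.norm ?_
  filter_upwards [Filter.eventually_ge_atTop N] with M hM
  rw [G_sub_G k t N M hM]
  exact tail_bound k hk t C θ hC hθ0 hθ1 hbound N M hN hM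

lemma hasDerivAt_G (k : ℕ) (N : ℕ) (u : ℝ) :
    HasDerivAt (fun x : ℝ => G k x N) (2 * Real.pi * Complex.I * S k u N) u := by
  have h : ∀ n ∈ Finset.Icc 1 N,
      HasDerivAt (fun x : ℝ => f k x n) (2 * Real.pi * Complex.I * a k u n) u := by
    intro n hn
    obtain ⟨hn1, _⟩ := Finset.mem_Icc.1 hn
    set c : ℂ := 2 * Real.pi * Complex.I * ((n:ℂ))^k with hcdef
    have h1 : HasDerivAt (fun z : ℂ => Complex.exp (c * z)) (Complex.exp (c * u) * c) (u:ℂ) := by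
      simpa [mul_comm] using ((hasDerivAt_id ((u:ℝ):ℂ)).const_mul c).cexp
    have h2 : HasDerivAt (fun x : ℝ => Complex.exp (c * x)) (Complex.exp (c * u) * c) u :=
      h1.comp_ofReal
    have h3 := (h2.const_mul ((ArithmeticFunction.moebius n : ℤ):ℂ)).div_const (((n:ℂ))^k)
    have hne : ((n:ℂ))^k ≠ 0 := pow_ne_zero _ (Nat.cast_ne_zero.2 (by omega))
    convert h3 using 1
    · rfl
    · rfl
    rw [a, hcdef]
    field_simp
  have hsum := HasDerivAt.fun_sum h
  rw [S, Finset.mul_sum]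
  exact hsum

end Stmt17
namespace Stmt17

lemma tendsto_G_explicit (k : ℕ) (hk : 2 ≤ k) (t : ℝ) :
    Tendsto (fun N : ℕ => ∑ n ∈ Finset.Icc 1 N,
        (ArithmeticFunction.moebius n : ℂ) *
          Complex.exp (2 * Real.pi * Complex.I * ((n : ℂ) ^ k) * (t : ℂ)) / ((n : ℂ) ^ k))
      atTop (𝓝 (F k t)) := by
  have h := tendsto_G k hk t
  unfold G f a at h
  exact h

end Stmt17

/-- For an integer `k ≥ 2`, assuming the (GRH-conditional) bound
`|∑_{1 ≤ n ≤ x} μ(n) e^{2πi n^k t}| ≤ C_ε x^{1 − 2^{1−2k} + ε}` for every `ε > 0`, the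
series `F_{k,k}(μ;t) = ∑ μ(n) e^{2πi n^k t}/n^k` converges and, for every
`0 < ε < 1 − (1 − 2^{1−2k})/k`, is Hölder continuous with exponent
`1 − (1 − 2^{1−2k})/k − ε`, and likewise for its absolute value, real and imaginary parts. -/
theorem stmt_17 (k : ℕ) (hk : 2 ≤ k)
    (hS : ∀ ε : ℝ, 0 < ε → ∃ Cε : ℝ, 0 < Cε ∧ ∀ x : ℝ, 1 ≤ x → ∀ t : ℝ,
      ‖∑ n ∈ Finset.Icc 1 ⌊x⌋₊,
        (ArithmeticFunction.moebius n : ℂ) *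
          Complex.exp (2 * Real.pi * Complex.I * ((n : ℂ) ^ k) * (t : ℂ))‖
        ≤ Cε * x ^ (1 - (2 : ℝ) ^ (1 - 2 * (k : ℝ)) + ε)) :
    ∃ F : ℝ → ℂ,
      (∀ t : ℝ, Tendsto (fun N : ℕ => ∑ n ∈ Finset.Icc 1 N,
          (ArithmeticFunction.moebius n : ℂ) *
            Complex.exp (2 * Real.pi * Complex.I * ((n : ℂ) ^ k) * (t : ℂ)) / ((n : ℂ) ^ k))
        atTop (𝓝 (F t))) ∧
      ∀ ε : ℝ, 0 < ε → ε < 1 - (1 - (2 : ℝ) ^ (1 - 2 * (k : ℝ))) / k →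
        ∃ C₁ : ℝ, 0 < C₁ ∧
          (∀ s t : ℝ, ‖F s - F t‖
              ≤ C₁ * |s - t| ^ (1 - (1 - (2 : ℝ) ^ (1 - 2 * (k : ℝ))) / k - ε)) ∧
          (∀ s t : ℝ, |‖F s‖ - ‖F t‖|
              ≤ C₁ * |s - t| ^ (1 - (1 - (2 : ℝ) ^ (1 - 2 * (k : ℝ))) / k - ε)) ∧
          (∀ s t : ℝ, |(F s).re - (F t).re|
              ≤ C₁ * |s - t| ^ (1 - (1 - (2 : ℝ) ^ (1 - 2 * (k : ℝ))) / k - ε)) ∧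
          (∀ s t : ℝ, |(F s).im - (F t).im|
              ≤ C₁ * |s - t| ^ (1 - (1 - (2 : ℝ) ^ (1 - 2 * (k : ℝ))) / k - ε)) := by
  refine ⟨Stmt17.F k, fun t => Stmt17.tendsto_G_explicit k hk t, ?_⟩
  intro ε hε0 hεlt
  set δ : ℝ := (2 : ℝ) ^ (1 - 2 * (k : ℝ)) with hδdef
  have hkR : (2:ℝ) ≤ (k:ℝ) := by exact_mod_cast hk
  have hkpos : (0:ℝ) < (k:ℝ) := by linarith
  have hδ0 : 0 < δ := Real.rpow_pos_of_pos two_pos _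
  have hδ1 : δ < 1 := Real.rpow_lt_one_of_one_lt_of_neg one_lt_two (by linarith)
  set ε₀ : ℝ := min ((k:ℝ) * ε) (δ/2) with hε₀def
  have hε₀0 : 0 < ε₀ := lt_min (by positivity) (by positivity)
  have hε₀le : ε₀ ≤ (k:ℝ) * ε := min_le_left _ _
  have hε₀le2 : ε₀ ≤ δ/2 := min_le_right _ _
  obtain ⟨C, hC, hCbd⟩ := hS ε₀ hε₀0
  set θ : ℝ := 1 - δ + ε₀ with hθdef
  have hθ0 : 0 < θ := by simp only [hθdef]; linarith
  have hθ1 : θ ≤ 1 := by simp only [hθdef]; linarith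
  set α : ℝ := 1 - (1 - δ) / k - ε with hαdef
  have hα0 : 0 < α := by simp only [hαdef]; linarith
  have hαle : α ≤ 1 - θ/(k:ℝ) := by
    have h1 : θ/(k:ℝ) = (1-δ)/(k:ℝ) + ε₀/(k:ℝ) := by rw [hθdef]; ring
    have h2 : ε₀/(k:ℝ) ≤ ε := by
      rw [div_le_iff₀ hkpos]
      linarith [hε₀le, mul_comm (k:ℝ) ε]
    rw [hαdef, h1]
    linarith
  have hbound : ∀ (t : ℝ) (n : ℕ), 1 ≤ n → ‖Stmt17.S k t n‖ ≤ C * (n:ℝ) ^ θ := by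
    intro t n hn
    have h1 : (1:ℝ) ≤ (n:ℝ) := by exact_mod_cast hn
    have h2 := hCbd (n:ℝ) h1 t
    rw [Nat.floor_natCast] at h2
    exact h2
  set C₁ : ℝ := C * (2*((k:ℝ)+2)) + 4*Real.pi*C + 4 with hC₁def
  have hC₁ : 0 < C₁ := by
    have := Real.pi_pos
    positivity
  have main : ∀ s t : ℝ, ‖Stmt17.F k s - Stmt17.F k t‖ ≤ C₁ * |s - t| ^ α := by
    intro s t
    rcases eq_or_ne s t with hst | hst
    · subst hst
      simp [Real.zero_rpow hα0.ne']
    have hpos : 0 < |s - t| := abs_pos.2 (sub_ne_zero.2 hst)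
    rcases le_or_gt 1 (|s - t|) with hbig | hsmall
    · have h4 : ‖Stmt17.F k s - Stmt17.F k t‖ ≤ 4 := by
        have := Stmt17.norm_F_le k hk s
        have := Stmt17.norm_F_le k hk t
        calc ‖Stmt17.F k s - Stmt17.F k t‖ ≤ ‖Stmt17.F k s‖ + ‖Stmt17.F k t‖ := norm_sub_le _ _
          _ ≤ 4 := by linarith
      have h5 : (1:ℝ) ≤ |s - t| ^ α := Real.one_le_rpow hbig hα0.le
      have h6 : (4:ℝ) ≤ C₁ := by
        have := Real.pi_pos
        have hc2 : (0:ℝ) ≤ C * (2*((k:ℝ)+2)) := by positivity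
        have hc3 : (0:ℝ) ≤ 4*Real.pi*C := by positivity
        simp only [hC₁def]; linarith
      calc ‖Stmt17.F k s - Stmt17.F k t‖ ≤ 4 := h4
        _ = 4 * 1 := by ring
        _ ≤ C₁ * |s - t| ^ α := mul_le_mul h6 h5 zero_le_one (by linarith)
    · -- 0 < |s - t| < 1
      set h : ℝ := |s - t| with hhdef
      set x : ℝ := h ^ (-(1:ℝ)/(k:ℝ)) with hxdef
      have hx1 : 1 ≤ x := by
        apply Real.one_le_rpow_of_pos_of_le_one_of_nonpos hpos (le_of_lt hsmall)
        rw [neg_div]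
        exact neg_nonpos.2 (by positivity)
      have hxpos : 0 < x := by linarith
      set N : ℕ := ⌈x⌉₊ with hNdef
      have hN1 : 1 ≤ N := Nat.one_le_ceil_iff.2 hxpos
      have hxN : x ≤ (N:ℝ) := Nat.le_ceil x
      have hNx2 : (N:ℝ) ≤ 2*x := by
        have := Nat.ceil_lt_add_one hxpos.le
        linarith
      have hNpos : (0:ℝ) < (N:ℝ) := by linarith
      -- exponent algebra
      have hxe : ∀ c : ℝ, x ^ c = h ^ (-(1:ℝ)/(k:ℝ) * c) := by
        intro c
        rw [hxdef, ← Real.rpow_mul hpos.le]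
      have he1 : -(1:ℝ)/(k:ℝ) * (θ - k) = 1 - θ/(k:ℝ) := by
        field_simp
        ring
      have he2 : (1:ℝ) - θ/(k:ℝ) = -(1:ℝ)/(k:ℝ) * θ + 1 := by
        field_simp
        ring
      -- tail bounds
      have htails : ∀ u : ℝ, ‖Stmt17.F k u - Stmt17.G k u N‖
          ≤ C * ((k:ℝ) + 2) * h ^ (1 - θ/(k:ℝ)) := by
        intro u
        refine le_trans (Stmt17.norm_F_sub_G_le k hk u C θ hC hθ0 hθ1 (hbound u) N hN1) ?_
        have h1 : (N:ℝ) ^ (θ - (k:ℝ)) ≤ x ^ (θ - (k:ℝ)) :=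
          Real.rpow_le_rpow_of_nonpos hxpos hxN (by linarith)
        have h2 : x ^ (θ - (k:ℝ)) = h ^ (1 - θ/(k:ℝ)) := by rw [hxe, he1]
        have h3 : (0:ℝ) ≤ C * ((k:ℝ)+2) := by positivity
        nlinarith [h1, h2 ▸ h1]
      -- head bound via MVT
      have hhead : ‖Stmt17.G k s N - Stmt17.G k t N‖ ≤ 2*Real.pi*C*(N:ℝ)^θ * h := by
        have hD : ∀ u : ℝ, ‖2*(Real.pi:ℂ)*Complex.I * Stmt17.S k u N‖ ≤ 2*Real.pi*C*(N:ℝ)^θ := by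
          intro u
          rw [norm_mul]
          have hI : ‖2*(Real.pi:ℂ)*Complex.I‖ = 2*Real.pi := by
            rw [norm_mul, norm_mul, Complex.norm_I, Complex.norm_real, Real.norm_eq_abs,
              abs_of_nonneg Real.pi_nonneg]
            norm_num
          rw [hI]
          have := hbound u N hN1
          have hpi : (0:ℝ) ≤ 2*Real.pi := by positivity
          calc 2*Real.pi * ‖Stmt17.S k u N‖ ≤ 2*Real.pi * (C * (N:ℝ)^θ) := by
                exact mul_le_mul_of_nonneg_left this hpi
            _ = 2*Real.pi*C*(N:ℝ)^θ := by ring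
        have := Convex.norm_image_sub_le_of_norm_hasDerivWithin_le
          (f := fun u : ℝ => Stmt17.G k u N)
          (f' := fun u : ℝ => 2*(Real.pi:ℂ)*Complex.I * Stmt17.S k u N)
          (s := Set.univ)
          (fun u _ => (Stmt17.hasDerivAt_G k N u).hasDerivWithinAt)
          (fun u _ => hD u) convex_univ (Set.mem_univ t) (Set.mem_univ s)
        rw [Real.norm_eq_abs] at this
        exact this
      have hNθ : (N:ℝ)^θ ≤ 2 * x^θ := by
        calc (N:ℝ)^θ ≤ (2*x)^θ := Real.rpow_le_rpow hNpos.le hNx2 hθ0.le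
          _ = 2^θ * x^θ := Real.mul_rpow (by norm_num) hxpos.le
          _ ≤ 2 * x^θ := by
            have h2θ : (2:ℝ)^θ ≤ 2 := by
              calc (2:ℝ)^θ ≤ (2:ℝ)^(1:ℝ) := Real.rpow_le_rpow_of_exponent_le one_le_two hθ1
                _ = 2 := Real.rpow_one 2
            have := Real.rpow_nonneg hxpos.le θ
            nlinarith
      have hxθh : x^θ * h = h ^ (1 - θ/(k:ℝ)) := by
        rw [hxe, he2, Real.rpow_add hpos, Real.rpow_one]
      have hcomb : ‖Stmt17.F k s - Stmt17.F k t‖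
          ≤ (C*(2*((k:ℝ)+2)) + 4*Real.pi*C) * h ^ (1 - θ/(k:ℝ)) := by
        have e1 := htails s
        have e2 := htails t
        have e3 : ‖Stmt17.F k s - Stmt17.F k t‖
            ≤ ‖Stmt17.F k s - Stmt17.G k s N‖ + ‖Stmt17.G k s N - Stmt17.G k t N‖
              + ‖Stmt17.G k t N - Stmt17.F k t‖ := by
          have := norm_add₃_le (a := Stmt17.F k s - Stmt17.G k s N)
            (b := Stmt17.G k s N - Stmt17.G k t N) (c := Stmt17.G k t N - Stmt17.F k t)
          simpa using this
        have e4 : ‖Stmt17.G k t N - Stmt17.F k t‖ = ‖Stmt17.F k t - Stmt17.G k t N‖ :=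
          norm_sub_rev _ _
        have e5 : 2*Real.pi*C*(N:ℝ)^θ * h ≤ 2*Real.pi*C*(2*x^θ) * h := by
          have hpi : (0:ℝ) ≤ 2*Real.pi*C := by positivity
          have : 2*Real.pi*C*(N:ℝ)^θ ≤ 2*Real.pi*C*(2*x^θ) := mul_le_mul_of_nonneg_left hNθ hpi
          nlinarith [hpos]
        have e6 : 2*Real.pi*C*(2*x^θ) * h = 4*Real.pi*C * (x^θ * h) := by ring
        rw [e4] at e3
        have e7 := hhead.trans (e5.trans_eq e6)
        rw [hxθh] at e7
        calc ‖Stmt17.F k s - Stmt17.F k t‖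
            ≤ ‖Stmt17.F k s - Stmt17.G k s N‖ + ‖Stmt17.G k s N - Stmt17.G k t N‖
              + ‖Stmt17.F k t - Stmt17.G k t N‖ := e3
          _ ≤ C * ((k:ℝ)+2) * h ^ (1 - θ/(k:ℝ)) + 4*Real.pi*C * h ^ (1 - θ/(k:ℝ))
              + C * ((k:ℝ)+2) * h ^ (1 - θ/(k:ℝ)) := by
            have := htails s
            have := htails t
            linarith [e7]
          _ = (C*(2*((k:ℝ)+2)) + 4*Real.pi*C) * h ^ (1 - θ/(k:ℝ)) := by ring
      have hfinal : h ^ (1 - θ/(k:ℝ)) ≤ h ^ α :=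
        Real.rpow_le_rpow_of_exponent_ge hpos hsmall.le hαle
      have hcoef : (0:ℝ) ≤ C*(2*((k:ℝ)+2)) + 4*Real.pi*C := by
        have := Real.pi_pos
        positivity
      calc ‖Stmt17.F k s - Stmt17.F k t‖
          ≤ (C*(2*((k:ℝ)+2)) + 4*Real.pi*C) * h ^ (1 - θ/(k:ℝ)) := hcomb
        _ ≤ (C*(2*((k:ℝ)+2)) + 4*Real.pi*C) * h ^ α := mul_le_mul_of_nonneg_left hfinal hcoef
        _ ≤ C₁ * h ^ α := by
          have hh : (0:ℝ) ≤ h ^ α := Real.rpow_nonneg hpos.le α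
          have : C*(2*((k:ℝ)+2)) + 4*Real.pi*C ≤ C₁ := by simp only [hC₁def]; linarith
          exact mul_le_mul_of_nonneg_right this hh
  refine ⟨C₁, hC₁, ?_, ?_, ?_, ?_⟩
  · intro s t
    have := main s t
    exact this
  · intro s t
    refine le_trans ?_ (main s t)
    have := abs_norm_sub_norm_le (Stmt17.F k s) (Stmt17.F k t)
    exact this
  · intro s t
    refine le_trans ?_ (main s t)
    have h1 : (Stmt17.F k s).re - (Stmt17.F k t).re = (Stmt17.F k s - Stmt17.F k t).re := by
      simp [Complex.sub_re]
    rw [h1]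
    exact Complex.abs_re_le_norm _
  · intro s t
    refine le_trans ?_ (main s t)
    have h1 : (Stmt17.F k s).im - (Stmt17.F k t).im = (Stmt17.F k s - Stmt17.F k t).im := by
      simp [Complex.sub_im]
    rw [h1]
    exact Complex.abs_im_le_norm _
end

section
/- Let k ≥ 2 be an integer and let f : ℕ → ℂ be a bounded function. Then the series F_{k,k}(f;t) = Σ_{n=1}^∞ f(n)e^{2πi n^k t}/n^k converges for every t ∈ ℝ, the function F_{k,k}(f;·) is Hölder continuous with exponent 1 − 1/k (i.e., there exists C₁ > 0 with |F_{k,k}(f;s) − F_{k,k}(f;t)| ≤ C₁·|s−t|^{1−1/k} for all s, t ∈ ℝ), and the Hausdorff dimension of each of the graphs {(t, |F_{k,k}(f;t)|) : t ∈ [0,1]}, {(t, Re F_{k,k}(f;t)) : t ∈ [0,1]}, and {(t, Im F_{k,k}(f;t)) : t ∈ [0,1]} in ℝ² is at most 1 + 1/k. -/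
open Filter Finset Topology
open scoped NNReal ENNReal

lemma per_term (k : ℕ) (hk : 2 ≤ k) (a : ℝ) (ha : 1 ≤ a) :
    1 / (a+1) ^ k ≤ 1 / a ^ (k-1) - 1 / (a+1) ^ (k-1) := by
  have ha0 : 0 < a := by linarith
  have hb0 : (0:ℝ) < a + 1 := by linarith
  have hpa : (0:ℝ) < a ^ (k-1) := pow_pos ha0 _
  have hpb : (0:ℝ) < (a+1) ^ (k-1) := pow_pos hb0 _
  have hpbk : (0:ℝ) < (a+1) ^ k := pow_pos hb0 _
  rw [div_sub_div _ _ (ne_of_gt hpa) (ne_of_gt hpb), div_le_div_iff₀ hpbk (by positivity)]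
  obtain ⟨j, rfl⟩ : ∃ j, k = j + 2 := ⟨k - 2, by omega⟩
  have h1 : a ^ (j+1) * (a + 2) ≤ (a+1) ^ (j+1) * (a+1) := by
    have h2 : a ^ j ≤ (a+1) ^ j := pow_le_pow_left₀ ha0.le (by linarith) j
    calc a ^ (j+1) * (a+2) = a ^ j * (a * (a+2)) := by ring
      _ ≤ (a+1) ^ j * ((a+1)*(a+1)) :=
          mul_le_mul h2 (by nlinarith) (by nlinarith) (by positivity)
      _ = (a+1) ^ (j+1) * (a+1) := by ring
  have hj : j + 2 - 1 = j + 1 := by omega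
  rw [hj, pow_succ (a+1) (j+1)]
  nlinarith [mul_le_mul_of_nonneg_right h1 (pow_pos hb0 (j+1)).le]

lemma tail_sum (k : ℕ) (hk : 2 ≤ k) (N : ℕ) (hN : 1 ≤ N) :
    ∑' j : ℕ, 1 / ((N+1+j : ℕ) : ℝ) ^ k ≤ 1 / (N : ℝ) ^ (k-1) := by
  have hfin : ∀ m : ℕ, ∑ j ∈ range m, 1 / ((N+1+j : ℕ) : ℝ) ^ k
      ≤ 1 / (N : ℝ) ^ (k-1) - 1 / ((N+m : ℕ) : ℝ) ^ (k-1) := by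
    intro m
    induction m with
    | zero => simp
    | succ m ih =>
      rw [Finset.sum_range_succ]
      have ha : (1:ℝ) ≤ ((N+m : ℕ) : ℝ) := by
        have : 1 ≤ N + m := by omega
        exact_mod_cast this
      have hp := per_term k hk ((N+m : ℕ) : ℝ) ha
      have e1 : ((N+1+m : ℕ) : ℝ) = ((N+m : ℕ) : ℝ) + 1 := by push_cast; ring
      have e2 : ((N+(m+1) : ℕ) : ℝ) = ((N+m : ℕ) : ℝ) + 1 := by push_cast; ring
      rw [e1, e2]
      linarith
  apply Real.tsum_le_of_sum_range_le (fun n => by positivity)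
  intro m
  refine (hfin m).trans ?_
  have : (0:ℝ) ≤ 1 / ((N+m : ℕ) : ℝ) ^ (k-1) := by positivity
  linarith

noncomputable def Fterm (k : ℕ) (f : ℕ → ℂ) (t : ℝ) (n : ℕ) : ℂ :=
  f n * Complex.exp (2 * Real.pi * Complex.I * ((n : ℂ) ^ k) * (t : ℂ)) / ((n : ℂ) ^ k)

lemma Fterm_zero (k : ℕ) (hk : 2 ≤ k) (f : ℕ → ℂ) (t : ℝ) : Fterm k f t 0 = 0 := by
  simp [Fterm, zero_pow (by omega : k ≠ 0)]

lemma exp_abs_one (k : ℕ) (n : ℕ) (t : ℝ) :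
    ‖Complex.exp (2 * Real.pi * Complex.I * ((n : ℂ) ^ k) * (t : ℂ))‖ = 1 := by
  have : (2 * Real.pi * Complex.I * ((n : ℂ) ^ k) * (t : ℂ))
      = ((2 * Real.pi * (n:ℝ)^k * t : ℝ) : ℂ) * Complex.I := by push_cast; ring
  rw [this, Complex.norm_exp_ofReal_mul_I]

lemma Fterm_bound (k : ℕ) (hk : 2 ≤ k) (f : ℕ → ℂ) (B : ℝ)
    (hf : ∀ n : ℕ, ‖f n‖ ≤ B) (t : ℝ) (n : ℕ) :
    ‖Fterm k f t n‖ ≤ B * (1 / (n:ℝ) ^ k) := by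
  rcases Nat.eq_zero_or_pos n with rfl | hn
  · simp [Fterm_zero k hk f t, zero_pow (by omega : k ≠ 0)]
  · have hnk : ‖(n:ℂ)^k‖ = (n:ℝ)^k := by
      rw [norm_pow, Complex.norm_natCast]
    rw [Fterm, norm_div, norm_mul, exp_abs_one, hnk, mul_one]
    rw [div_le_iff₀ (by positivity)]
    calc ‖f n‖ ≤ B := hf n
      _ = B * (1 / (n:ℝ)^k) * (n:ℝ)^k := by field_simp
  
lemma base_summable (k : ℕ) (hk : 2 ≤ k) : Summable (fun n : ℕ => 1 / (n:ℝ) ^ k) := by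
  have : Summable (fun n : ℕ => ((n:ℝ) ^ k)⁻¹) :=
    (Real.summable_nat_pow_inv).2 (by omega)
  simpa [one_div] using this

lemma Fterm_summable (k : ℕ) (hk : 2 ≤ k) (f : ℕ → ℂ) (B : ℝ)
    (hf : ∀ n : ℕ, ‖f n‖ ≤ B) (t : ℝ) :
    Summable (fun n => Fterm k f t n) := by
  apply Summable.of_norm_bounded (Summable.mul_left B (base_summable k hk))
  exact fun n => Fterm_bound k hk f B hf t n

lemma Fterm_norm_summable (k : ℕ) (hk : 2 ≤ k) (f : ℕ → ℂ) (B : ℝ)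
    (hf : ∀ n : ℕ, ‖f n‖ ≤ B) (t : ℝ) :
    Summable (fun n => ‖Fterm k f t n‖) := by
  apply Summable.of_nonneg_of_le (fun n => norm_nonneg _) (fun n => Fterm_bound k hk f B hf t n)
  exact Summable.mul_left B (base_summable k hk)

lemma F_tendsto (k : ℕ) (hk : 2 ≤ k) (f : ℕ → ℂ) (B : ℝ)
    (hf : ∀ n : ℕ, ‖f n‖ ≤ B) (t : ℝ) :
    Tendsto (fun N : ℕ => ∑ n ∈ Finset.Icc 1 N, Fterm k f t n)
      atTop (𝓝 (∑' n, Fterm k f t n)) := by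
  have h1 := (Fterm_summable k hk f B hf t).hasSum.tendsto_sum_nat
  have h2 : Tendsto (fun N : ℕ => ∑ n ∈ Finset.range (N+1), Fterm k f t n)
      atTop (𝓝 (∑' n, Fterm k f t n)) := h1.comp (tendsto_add_atTop_nat 1)
  convert h2 using 2 with N
  have : Finset.range (N+1) = insert 0 (Finset.Icc 1 N) := by
    ext m; simp [Nat.lt_succ_iff]; omega
  rw [this, Finset.sum_insert (by simp), Fterm_zero k hk f t, zero_add]

lemma exp_diff (x y : ℝ) :
    ‖Complex.exp (↑x * Complex.I) - Complex.exp (↑y * Complex.I)‖ ≤ 2 * |x - y| := by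
  have key : Complex.exp (↑x*Complex.I) - Complex.exp (↑y*Complex.I)
      = Complex.exp (↑y*Complex.I) * (Complex.exp (↑(x-y)*Complex.I) - 1) := by
    rw [mul_sub, ← Complex.exp_add, mul_one]
    congr 1
    push_cast; ring
  rw [key, norm_mul, Complex.norm_exp_ofReal_mul_I, one_mul]
  have habs : ‖↑(x-y)*Complex.I‖ = |x - y| := by
    rw [norm_mul, Complex.norm_I, Complex.norm_real, Real.norm_eq_abs, mul_one]
  by_cases hxy : |x - y| ≤ 1
  · have := Complex.norm_exp_sub_one_le (x := ↑(x-y)*Complex.I) (by rw [habs]; exact hxy)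
    rwa [habs] at this
  · push_neg at hxy
    calc ‖Complex.exp (↑(x-y)*Complex.I) - 1‖
        ≤ ‖Complex.exp (↑(x-y)*Complex.I)‖ + ‖(1:ℂ)‖ := by
          simpa using norm_sub_le _ (1:ℂ)
      _ = 2 := by rw [Complex.norm_exp_ofReal_mul_I, norm_one]; norm_num
      _ ≤ 2 * |x - y| := by nlinarith

lemma diff_bound1 (k : ℕ) (hk : 2 ≤ k) (f : ℕ → ℂ) (B : ℝ)
    (hf : ∀ n : ℕ, ‖f n‖ ≤ B) (s t : ℝ) (n : ℕ) :
    ‖Fterm k f s n - Fterm k f t n‖ ≤ 4 * Real.pi * B * |s - t| := by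
  have hB : 0 ≤ B := le_trans (norm_nonneg (f 0)) (hf 0)
  have hpi : 0 < Real.pi := Real.pi_pos
  rcases Nat.eq_zero_or_pos n with rfl | hn
  · rw [Fterm_zero k hk f s, Fterm_zero k hk f t, sub_zero, norm_zero]
    positivity
  · have hnR : (0:ℝ) < (n:ℝ)^k := by positivity
    have e : ∀ u : ℝ, (2 * Real.pi * Complex.I * ((n : ℂ) ^ k) * (u : ℂ))
        = ((2 * Real.pi * (n:ℝ)^k * u : ℝ) : ℂ) * Complex.I := by
      intro u; push_cast; ring
    have key : Fterm k f s n - Fterm k f t n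
        = f n * (Complex.exp (((2 * Real.pi * (n:ℝ)^k * s : ℝ) : ℂ) * Complex.I)
            - Complex.exp (((2 * Real.pi * (n:ℝ)^k * t : ℝ) : ℂ) * Complex.I)) / ((n : ℂ) ^ k) := by
      rw [Fterm, Fterm, e s, e t]; ring
    rw [key]
    have hnk : ‖(n:ℂ)^k‖ = (n:ℝ)^k := by rw [norm_pow, Complex.norm_natCast]
    rw [norm_div, norm_mul, hnk]
    have hexp := exp_diff (2 * Real.pi * (n:ℝ)^k * s) (2 * Real.pi * (n:ℝ)^k * t)
    have e2 : |2 * Real.pi * (n:ℝ)^k * s - 2 * Real.pi * (n:ℝ)^k * t|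
        = 2 * Real.pi * (n:ℝ)^k * |s - t| := by
      rw [← mul_sub, abs_mul, abs_of_nonneg (by positivity : (0:ℝ) ≤ 2 * Real.pi * (n:ℝ)^k)]
    rw [e2] at hexp
    rw [div_le_iff₀ hnR]
    calc ‖f n‖ * ‖Complex.exp _ - Complex.exp _‖
        ≤ B * (2 * (2 * Real.pi * (n:ℝ)^k * |s - t|)) :=
          mul_le_mul (hf n) hexp (norm_nonneg _) hB
      _ = 4 * Real.pi * B * |s - t| * (n:ℝ)^k := by ring

lemma tsum_base_le_two (k : ℕ) (hk : 2 ≤ k) : ∑' n : ℕ, 1 / (n:ℝ) ^ k ≤ 2 := by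
  have hsum := base_summable k hk
  have hsplit := Summable.sum_add_tsum_nat_add (f := fun n : ℕ => 1 / (n:ℝ) ^ k) 2 hsum
  rw [← hsplit]
  have h1 : ∑ i ∈ range 2, 1 / ((i:ℝ)) ^ k = 1 := by
    rw [Finset.sum_range_succ, Finset.sum_range_one]
    norm_num [zero_pow (by omega : k ≠ 0)]
  have h2 : ∑' j : ℕ, 1 / (((j:ℕ)+2:ℝ)) ^ k ≤ 1 := by
    have := tail_sum k hk 1 le_rfl
    have he : ∀ j : ℕ, ((1+1+j : ℕ) : ℝ) = ((j:ℝ)+2) := by intro j; push_cast; ring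
    simp only [he] at this
    simpa using this
  push_cast at h1 h2 ⊢
  linarith

lemma F_abs_le (k : ℕ) (hk : 2 ≤ k) (f : ℕ → ℂ) (B : ℝ)
    (hf : ∀ n : ℕ, ‖f n‖ ≤ B) (t : ℝ) :
    ‖∑' n, Fterm k f t n‖ ≤ 2 * B := by
  have hB : 0 ≤ B := le_trans (norm_nonneg (f 0)) (hf 0)
  calc ‖∑' n, Fterm k f t n‖ ≤ ∑' n, ‖Fterm k f t n‖ :=
        norm_tsum_le_tsum_norm (Fterm_norm_summable k hk f B hf t)
    _ ≤ ∑' n : ℕ, B * (1 / (n:ℝ) ^ k) :=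
        Summable.tsum_le_tsum (fun n => Fterm_bound k hk f B hf t n)
          (Fterm_norm_summable k hk f B hf t) ((base_summable k hk).mul_left B)
    _ = B * ∑' n : ℕ, 1 / (n:ℝ) ^ k := tsum_mul_left
    _ ≤ B * 2 := mul_le_mul_of_nonneg_left (tsum_base_le_two k hk) hB
    _ = 2 * B := by ring

lemma tail_est (k : ℕ) (hk : 2 ≤ k) (f : ℕ → ℂ) (B : ℝ)
    (hf : ∀ n : ℕ, ‖f n‖ ≤ B) (s t : ℝ) (N : ℕ) (hN1 : 1 ≤ N) :
    ∑' j : ℕ, ‖Fterm k f s (j+(N+1)) - Fterm k f t (j+(N+1))‖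
      ≤ 2 * B * (1/(N:ℝ)^(k-1)) := by
  have hB : 0 ≤ B := le_trans (norm_nonneg (f 0)) (hf 0)
  have hdnorm : Summable (fun n => ‖Fterm k f s n - Fterm k f t n‖) :=
    Summable.of_nonneg_of_le (fun n => norm_nonneg _) (fun n => norm_sub_le _ _)
      ((Fterm_norm_summable k hk f B hf s).add (Fterm_norm_summable k hk f B hf t))
  have hs1 : Summable (fun j : ℕ => ‖Fterm k f s (j+(N+1)) - Fterm k f t (j+(N+1))‖) :=
    (summable_nat_add_iff (f := fun n => ‖Fterm k f s n - Fterm k f t n‖) (N+1)).2 hdnorm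
  have hs2 : Summable (fun j : ℕ => 2 * B * (1 / ((j+(N+1):ℕ):ℝ) ^ k)) := by
    apply Summable.mul_left
    exact_mod_cast (summable_nat_add_iff (f := fun n : ℕ => 1 / (n:ℝ) ^ k) (N+1)).2 (base_summable k hk)
  have hterm : ∀ j : ℕ, ‖Fterm k f s (j+(N+1)) - Fterm k f t (j+(N+1))‖
      ≤ 2 * B * (1 / ((j+(N+1):ℕ):ℝ) ^ k) := by
    intro j
    calc ‖Fterm k f s (j+(N+1)) - Fterm k f t (j+(N+1))‖
        ≤ ‖Fterm k f s (j+(N+1))‖ + ‖Fterm k f t (j+(N+1))‖ := norm_sub_le _ _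
      _ ≤ B * (1 / ((j+(N+1):ℕ):ℝ) ^ k) + B * (1 / ((j+(N+1):ℕ):ℝ) ^ k) := by
          have h1 := Fterm_bound k hk f B hf s (j+(N+1))
          have h2 := Fterm_bound k hk f B hf t (j+(N+1))
          push_cast at h1 h2 ⊢
          exact add_le_add h1 h2
      _ = 2 * B * (1 / ((j+(N+1):ℕ):ℝ) ^ k) := by ring
  calc ∑' j : ℕ, ‖Fterm k f s (j+(N+1)) - Fterm k f t (j+(N+1))‖
      ≤ ∑' j : ℕ, 2 * B * (1 / ((j+(N+1):ℕ):ℝ) ^ k) := Summable.tsum_le_tsum hterm hs1 hs2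
    _ = 2 * B * ∑' j : ℕ, (1 / ((j+(N+1):ℕ):ℝ) ^ k) := tsum_mul_left
    _ = 2 * B * ∑' j : ℕ, (1 / ((N+1+j:ℕ):ℝ) ^ k) := by
        congr 1
        apply tsum_congr
        intro j
        congr 3
        omega
    _ ≤ 2 * B * (1/(N:ℝ)^(k-1)) := by
        apply mul_le_mul_of_nonneg_left (tail_sum k hk N hN1) (by positivity)

lemma holder_main (k : ℕ) (hk : 2 ≤ k) (f : ℕ → ℂ) (B : ℝ)
    (hf : ∀ n : ℕ, ‖f n‖ ≤ B) (s t : ℝ) :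
    ‖(∑' n, Fterm k f s n) - ∑' n, Fterm k f t n‖
      ≤ (60*(B+1)) * |s - t| ^ (1 - 1/(k:ℝ)) := by
  have hB : 0 ≤ B := le_trans (norm_nonneg (f 0)) (hf 0)
  have hkR : (2:ℝ) ≤ (k:ℝ) := by exact_mod_cast hk
  have hk0 : (0:ℝ) < (k:ℝ) := by linarith
  set α : ℝ := 1 - 1/(k:ℝ) with hα
  have hα12 : 1/2 ≤ α := by
    have : 1/(k:ℝ) ≤ 1/2 := by
      rw [div_le_div_iff₀ hk0 (by norm_num)]; linarith
    simp only [hα]; linarith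
  have hα1 : α ≤ 1 := by
    have : 0 ≤ 1/(k:ℝ) := by positivity
    simp only [hα]; linarith
  have hα0 : 0 ≤ α := le_trans (by norm_num) hα12
  set h : ℝ := |s - t| with hh
  have h0 : 0 ≤ h := abs_nonneg _
  have hrnn : 0 ≤ h ^ α := Real.rpow_nonneg h0 α
  rcases eq_or_lt_of_le h0 with heq | hpos
  · have hst : s = t := by
      have h2 := heq.symm
      rw [hh] at h2
      exact sub_eq_zero.mp (abs_eq_zero.mp h2)
    rw [hst, sub_self, norm_zero]
    nlinarith [hrnn, hB]
  rcases le_or_gt 1 h with hge | hlt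
  · have h1 : (1:ℝ) ≤ h ^ α := by
      calc (1:ℝ) = 1 ^ α := (Real.one_rpow α).symm
        _ ≤ h ^ α := Real.rpow_le_rpow (by norm_num) hge hα0
    calc ‖(∑' n, Fterm k f s n) - ∑' n, Fterm k f t n‖
        ≤ ‖∑' n, Fterm k f s n‖ + ‖∑' n, Fterm k f t n‖ :=
          norm_sub_le _ _
      _ ≤ 2*B + 2*B := add_le_add (F_abs_le k hk f B hf s) (F_abs_le k hk f B hf t)
      _ ≤ (60*(B+1)) * h ^ α := by nlinarith [h1, hB]
  · set x : ℝ := h ^ (-(1/(k:ℝ))) with hx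
    have hx0 : 0 < x := Real.rpow_pos_of_pos hpos _
    have hx1 : 1 ≤ x := by
      calc (1:ℝ) = h ^ (0:ℝ) := (Real.rpow_zero h).symm
        _ ≤ x := Real.rpow_le_rpow_of_exponent_ge hpos hlt.le
            (neg_nonpos.mpr (by positivity))
    have hxh : x * h = h ^ α := by
      rw [hx]
      nth_rewrite 2 [← Real.rpow_one h]
      rw [← Real.rpow_add hpos]
      congr 1
      simp only [hα]
      ring
    obtain ⟨N, hNx, hNle, hN1⟩ : ∃ N : ℕ, x ≤ (N:ℝ) ∧ (N:ℝ) ≤ x + 1 ∧ 1 ≤ N :=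
      ⟨⌈x⌉₊, Nat.le_ceil x, (Nat.ceil_lt_add_one hx0.le).le, Nat.one_le_ceil_iff.2 hx0⟩
    have hpow : 1/(N:ℝ)^(k-1) ≤ h ^ α := by
      have hxk : x^(k-1) ≤ (N:ℝ)^(k-1) := pow_le_pow_left₀ hx0.le hNx _
      have hxe : x^(k-1) = h ^ (-α) := by
        rw [hx, ← Real.rpow_natCast (h ^ (-(1/(k:ℝ)))) (k-1), ← Real.rpow_mul hpos.le]
        congr 1
        have hcast : ((k-1:ℕ):ℝ) = (k:ℝ) - 1 := by
          have h1k : (1:ℕ) ≤ k := by omega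
          push_cast [Nat.cast_sub h1k]; ring
        rw [hcast]
        simp only [hα]
        field_simp
      have hxinv : 1/x^(k-1) = h ^ α := by
        rw [hxe, Real.rpow_neg hpos.le, one_div, inv_inv]
      rw [← hxinv]
      exact one_div_le_one_div_of_le (by positivity) hxk
    have hsums := Fterm_summable k hk f B hf s
    have hsumt := Fterm_summable k hk f B hf t
    have hdnorm : Summable (fun n => ‖Fterm k f s n - Fterm k f t n‖) :=
      Summable.of_nonneg_of_le (fun n => norm_nonneg _) (fun n => norm_sub_le _ _)
        ((Fterm_norm_summable k hk f B hf s).add (Fterm_norm_summable k hk f B hf t))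
    have heq2 : (∑' n, Fterm k f s n) - ∑' n, Fterm k f t n
        = ∑' n, (Fterm k f s n - Fterm k f t n) := (Summable.tsum_sub hsums hsumt).symm
    rw [heq2]
    have hsplit : ∑' n, ‖Fterm k f s n - Fterm k f t n‖
        = ∑ i ∈ range (N+1), ‖Fterm k f s i - Fterm k f t i‖
          + ∑' j : ℕ, ‖Fterm k f s (j+(N+1)) - Fterm k f t (j+(N+1))‖ :=
      (Summable.sum_add_tsum_nat_add (f := fun n => ‖Fterm k f s n - Fterm k f t n‖) (N+1) hdnorm).symm
    have hhead : ∑ i ∈ range (N+1), ‖Fterm k f s i - Fterm k f t i‖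
        ≤ 12 * Real.pi * B * h ^ α := by
      have hbd : ∀ i ∈ range (N+1), ‖Fterm k f s i - Fterm k f t i‖ ≤ 4 * Real.pi * B * h :=
        fun i _ => diff_bound1 k hk f B hf s t i
      have hpipos : 0 < Real.pi := Real.pi_pos
      calc ∑ i ∈ range (N+1), ‖Fterm k f s i - Fterm k f t i‖
          ≤ (N+1) • (4 * Real.pi * B * h) := by
            simpa using Finset.sum_le_card_nsmul _ _ _ hbd
        _ = ((N:ℝ)+1) * (4 * Real.pi * B * h) := by
            rw [nsmul_eq_mul]; push_cast; ring
        _ ≤ (3*x) * (4 * Real.pi * B * h) := by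
            apply mul_le_mul_of_nonneg_right (by linarith) (by positivity)
        _ = 12 * Real.pi * B * (x * h) := by ring
        _ = 12 * Real.pi * B * h ^ α := by rw [hxh]
    have htail := tail_est k hk f B hf s t N hN1
    have htail2 : ∑' j : ℕ, ‖Fterm k f s (j+(N+1)) - Fterm k f t (j+(N+1))‖
        ≤ 2 * B * h ^ α :=
      htail.trans (mul_le_mul_of_nonneg_left hpow (by positivity))
    have hpi : Real.pi < 3.15 := Real.pi_lt_d2
    have hpipos : 0 < Real.pi := Real.pi_pos
    calc ‖∑' n, (Fterm k f s n - Fterm k f t n)‖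
        ≤ ∑' n, ‖Fterm k f s n - Fterm k f t n‖ := norm_tsum_le_tsum_norm hdnorm
      _ = _ + _ := hsplit
      _ ≤ 12 * Real.pi * B * h ^ α + 2 * B * h ^ α := add_le_add hhead htail2
      _ ≤ (60*(B+1)) * h ^ α := by nlinarith [mul_nonneg hB hrnn, hrnn, hpi, hpipos, hB]

lemma graph_dimH (g : ℝ → ℝ) (c α : ℝ) (hc : 0 ≤ c) (hα0 : 0 < α) (hα1 : α ≤ 1)
    (hg : ∀ s t : ℝ, |g s - g t| ≤ c * |s - t| ^ α) :
    dimH {q : ℝ × ℝ | q.1 ∈ Set.Icc (0:ℝ) 1 ∧ q.2 = g q.1} ≤ ENNReal.ofReal (2 - α) := by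
  set S := {q : ℝ × ℝ | q.1 ∈ Set.Icc (0:ℝ) 1 ∧ q.2 = g q.1} with hS
  have hd0 : (0:ℝ) ≤ 2 - α := by linarith
  set L : ℕ → ℕ := fun n => ⌈2 * c * (n:ℝ) ^ (1 - α)⌉₊ + 1 with hL
  set box : ∀ n : ℕ, Fin n × Fin (L n) → Set (ℝ × ℝ) := fun n ij =>
    Set.Icc ((ij.1 : ℝ)/(n:ℝ)) (((ij.1 : ℝ)+1)/(n:ℝ)) ×ˢ
    Set.Icc (g ((ij.1 : ℝ)/(n:ℝ)) - c * (1/(n:ℝ)) ^ α + (ij.2 : ℝ)/(n:ℝ))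
      (g ((ij.1 : ℝ)/(n:ℝ)) - c * (1/(n:ℝ)) ^ α + ((ij.2 : ℝ)+1)/(n:ℝ)) with hbox
  have hdiam : ∀ n : ℕ, ∀ ij : Fin n × Fin (L n),
      EMetric.diam (box n ij) ≤ ENNReal.ofReal (1/(n:ℝ)) := by
    intro n ij
    apply EMetric.diam_le
    rintro ⟨p1, p2⟩ hp ⟨q1, q2⟩ hq
    simp only [hbox, Set.mem_prod, Set.mem_Icc] at hp hq
    obtain ⟨⟨hp11, hp12⟩, hp21, hp22⟩ := hp
    obtain ⟨⟨hq11, hq12⟩, hq21, hq22⟩ := hq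
    have e1 : ((ij.1:ℝ)+1)/(n:ℝ) = (ij.1:ℝ)/(n:ℝ) + 1/(n:ℝ) := by ring
    have e2 : ∀ y : ℝ, y + ((ij.2:ℝ)+1)/(n:ℝ) = y + (ij.2:ℝ)/(n:ℝ) + 1/(n:ℝ) := by
      intro y; ring
    rw [e1] at hp12 hq12
    rw [e2] at hp22 hq22
    rw [Prod.edist_eq]
    apply max_le
    · rw [edist_dist]
      apply ENNReal.ofReal_le_ofReal
      rw [Real.dist_eq, abs_le]
      constructor <;> simp only <;> linarith
    · rw [edist_dist]
      apply ENNReal.ofReal_le_ofReal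
      rw [Real.dist_eq, abs_le]
      constructor <;> simp only <;> linarith
  have hcover : ∀ n : ℕ, 1 ≤ n → S ⊆ ⋃ ij : Fin n × Fin (L n), box n ij := by
    intro n hn
    rintro ⟨x, y⟩ ⟨⟨hx0, hx1⟩, hy⟩
    replace hy : y = g x := hy
    replace hx0 : (0:ℝ) ≤ x := hx0
    replace hx1 : x ≤ 1 := hx1
    have hnR : (0:ℝ) < (n:ℝ) := by exact_mod_cast hn
    have hpowc : (1/(n:ℝ))^α * (n:ℝ) = (n:ℝ)^(1-α) := by
      rw [one_div, Real.inv_rpow hnR.le, Real.rpow_sub hnR, Real.rpow_one]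
      field_simp
    set i : ℕ := min ⌊x * n⌋₊ (n - 1) with hi
    have hi_lt : i < n := lt_of_le_of_lt (min_le_right _ _) (by omega)
    have hxi_low : (i:ℝ)/(n:ℝ) ≤ x := by
      have h1 : (i:ℕ) ≤ ⌊x*n⌋₊ := min_le_left _ _
      have h2 : ((⌊x*(n:ℝ)⌋₊:ℕ):ℝ) ≤ x*n := Nat.floor_le (by positivity)
      rw [div_le_iff₀ hnR]
      calc (i:ℝ) ≤ ((⌊x*(n:ℝ)⌋₊:ℕ):ℝ) := by exact_mod_cast h1
        _ ≤ x*n := h2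
    have hxi_high : x ≤ ((i:ℝ)+1)/(n:ℝ) := by
      rcases le_or_gt ⌊x*(n:ℝ)⌋₊ (n-1) with hcase | hcase
      · have hieq : i = ⌊x*(n:ℝ)⌋₊ := min_eq_left hcase
        have h2 : x*(n:ℝ) < (⌊x*(n:ℝ)⌋₊:ℕ) + 1 := Nat.lt_floor_add_one _
        rw [le_div_iff₀ hnR, hieq]
        push_cast at h2 ⊢
        linarith
      · have hieq : i = n - 1 := min_eq_right (by omega)
        have hc2 : ((i:ℕ):ℝ) + 1 = (n:ℝ) := by
          rw [hieq]
          have : (1:ℕ) ≤ n := hn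
          push_cast [Nat.cast_sub this]
          ring
        rw [le_div_iff₀ hnR, hc2]
        nlinarith
    have hdist : |x - (i:ℝ)/(n:ℝ)| ≤ 1/(n:ℝ) := by
      have e1 : ((i:ℝ)+1)/(n:ℝ) = (i:ℝ)/(n:ℝ) + 1/(n:ℝ) := by ring
      rw [abs_le]
      constructor <;> [linarith [one_div_pos.mpr hnR]; linarith [e1 ▸ hxi_high]]
    have hgd : |g x - g ((i:ℝ)/(n:ℝ))| ≤ c * (1/(n:ℝ))^α := by
      refine (hg x _).trans ?_
      apply mul_le_mul_of_nonneg_left _ hc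
      exact Real.rpow_le_rpow (abs_nonneg _) hdist hα0.le
    set z := y - (g ((i:ℝ)/(n:ℝ)) - c * (1/(n:ℝ))^α) with hz
    obtain ⟨hgd1, hgd2⟩ := abs_le.mp hgd
    have hz0 : 0 ≤ z := by rw [hz, hy]; linarith
    have hz_up : z ≤ 2*c*(1/(n:ℝ))^α := by rw [hz, hy]; linarith
    set j : ℕ := ⌊z * (n:ℝ)⌋₊ with hj
    have hj_lt : j < L n := by
      have h1 : z * (n:ℝ) ≤ 2*c*(n:ℝ)^(1-α) := by
        calc z * (n:ℝ) ≤ 2*c*(1/(n:ℝ))^α * (n:ℝ) :=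
              mul_le_mul_of_nonneg_right hz_up hnR.le
          _ = 2*c*((1/(n:ℝ))^α * (n:ℝ)) := by ring
          _ = 2*c*(n:ℝ)^(1-α) := by rw [hpowc]
      have h2 : j ≤ ⌊2*c*(n:ℝ)^(1-α)⌋₊ := Nat.floor_le_floor h1
      have h3 : ⌊2*c*(n:ℝ)^(1-α)⌋₊ ≤ ⌈2*c*(n:ℝ)^(1-α)⌉₊ := Nat.floor_le_ceil _
      simp only [hL]
      omega
    have hf1 : (j:ℝ) ≤ z*(n:ℝ) := Nat.floor_le (by positivity)
    have hf2 : z*(n:ℝ) < (j:ℝ)+1 := Nat.lt_floor_add_one _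
    refine Set.mem_iUnion.2 ⟨(⟨i, hi_lt⟩, ⟨j, hj_lt⟩), ?_⟩
    simp only [hbox, Set.mem_prod, Set.mem_Icc]
    refine ⟨⟨hxi_low, hxi_high⟩, ?_, ?_⟩
    · have : (j:ℝ)/(n:ℝ) ≤ z := by rw [div_le_iff₀ hnR]; linarith
      rw [hz] at this
      linarith
    · have : z ≤ ((j:ℝ)+1)/(n:ℝ) := by rw [le_div_iff₀ hnR]; linarith
      rw [hz] at this
      linarith
  have hsum : ∀ n : ℕ, 1 ≤ n →
      ∑ ij : Fin n × Fin (L n), EMetric.diam (box n ij) ^ (2 - α : ℝ)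
        ≤ ENNReal.ofReal (2*c+2) := by
    intro n hn
    have hnR : (0:ℝ) < (n:ℝ) := by exact_mod_cast hn
    have hreal : ((n * L n : ℕ):ℝ) * (1/(n:ℝ))^(2-α:ℝ) ≤ 2*c+2 := by
      have hLle : ((L n : ℕ):ℝ) ≤ 2*c*(n:ℝ)^(1-α) + 2 := by
        simp only [hL]
        push_cast
        have := Nat.ceil_lt_add_one (show (0:ℝ) ≤ 2*c*(n:ℝ)^(1-α) by positivity)
        linarith
      have hkey : (n:ℝ) * (1/(n:ℝ))^(2-α:ℝ) = (n:ℝ)^(α-1:ℝ) := by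
        rw [one_div, Real.inv_rpow hnR.le]
        rw [show (n:ℝ) * ((n:ℝ)^(2-α:ℝ))⁻¹ = (n:ℝ)^(1:ℝ) / (n:ℝ)^(2-α:ℝ) by
          rw [Real.rpow_one]; ring]
        rw [← Real.rpow_sub hnR]
        congr 1
        ring
      have hmul : (n:ℝ)^(1-α:ℝ) * (n:ℝ)^(α-1:ℝ) = 1 := by
        rw [← Real.rpow_add hnR, show (1-α)+(α-1) = 0 by ring, Real.rpow_zero]
      have hle1 : (n:ℝ)^(α-1:ℝ) ≤ 1 :=
        Real.rpow_le_one_of_one_le_of_nonpos (by exact_mod_cast hn) (by linarith)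
      have hge0 : (0:ℝ) ≤ (n:ℝ)^(α-1:ℝ) := Real.rpow_nonneg hnR.le _
      have hL0 : (0:ℝ) ≤ ((L n : ℕ):ℝ) := by positivity
      calc ((n * L n : ℕ):ℝ) * (1/(n:ℝ))^(2-α:ℝ)
          = ((L n : ℕ):ℝ) * ((n:ℝ) * (1/(n:ℝ))^(2-α:ℝ)) := by push_cast; ring
        _ = ((L n : ℕ):ℝ) * (n:ℝ)^(α-1:ℝ) := by rw [hkey]
        _ ≤ (2*c*(n:ℝ)^(1-α) + 2) * (n:ℝ)^(α-1:ℝ) :=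
            mul_le_mul_of_nonneg_right hLle hge0
        _ = 2*c*((n:ℝ)^(1-α) * (n:ℝ)^(α-1:ℝ)) + 2*(n:ℝ)^(α-1:ℝ) := by ring
        _ = 2*c + 2*(n:ℝ)^(α-1:ℝ) := by rw [hmul]; ring
        _ ≤ 2*c+2 := by linarith
    calc ∑ ij : Fin n × Fin (L n), EMetric.diam (box n ij) ^ (2 - α : ℝ)
        ≤ ∑ _ij : Fin n × Fin (L n), ENNReal.ofReal (1/(n:ℝ)) ^ (2-α:ℝ) :=
          Finset.sum_le_sum fun ij _ => ENNReal.rpow_le_rpow (hdiam n ij) hd0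
      _ = (Fintype.card (Fin n × Fin (L n))) • ENNReal.ofReal (1/(n:ℝ)) ^ (2-α:ℝ) := by
          rw [Finset.sum_const, Finset.card_univ]
      _ = ((n * L n : ℕ) : ℝ≥0∞) * ENNReal.ofReal (1/(n:ℝ)) ^ (2-α:ℝ) := by
          rw [nsmul_eq_mul, Fintype.card_prod, Fintype.card_fin, Fintype.card_fin]
      _ = ENNReal.ofReal ((n * L n : ℕ):ℝ) * ENNReal.ofReal ((1/(n:ℝ))^(2-α:ℝ)) := by
          rw [ENNReal.ofReal_rpow_of_nonneg (by positivity) hd0, ENNReal.ofReal_natCast]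
      _ = ENNReal.ofReal (((n * L n : ℕ):ℝ) * (1/(n:ℝ))^(2-α:ℝ)) :=
          (ENNReal.ofReal_mul (by positivity)).symm
      _ ≤ ENNReal.ofReal (2*c+2) := ENNReal.ofReal_le_ofReal hreal
  have hr : Tendsto (fun n : ℕ => ENNReal.ofReal (1/(n:ℝ))) atTop (𝓝 0) := by
    have h1 : Tendsto (fun n : ℕ => (1:ℝ)/(n:ℝ)) atTop (𝓝 0) :=
      tendsto_one_div_atTop_nhds_zero_nat
    have h2 := (ENNReal.continuous_ofReal.tendsto 0).comp h1
    simpa [Function.comp_def] using h2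
  have hmeas := MeasureTheory.Measure.hausdorffMeasure_le_liminf_sum (2-α : ℝ) S
      (fun n : ℕ => ENNReal.ofReal (1/(n:ℝ))) hr box
      (Eventually.of_forall hdiam)
      (by filter_upwards [eventually_ge_atTop 1] with n hn using hcover n hn)
  have hlim : Filter.liminf
      (fun n => ∑ ij : Fin n × Fin (L n), EMetric.diam (box n ij) ^ (2-α:ℝ)) atTop
      ≤ ENNReal.ofReal (2*c+2) := by
    refine le_trans (Filter.liminf_le_liminf ?_)
      (le_of_eq (Filter.liminf_const (ENNReal.ofReal (2*c+2)) (f := Filter.atTop)))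
    filter_upwards [eventually_ge_atTop 1] with n hn using hsum n hn
  have hne : MeasureTheory.Measure.hausdorffMeasure
      ((Real.toNNReal (2-α) : ℝ≥0) : ℝ) S ≠ ⊤ := by
    rw [Real.coe_toNNReal _ hd0]
    exact ne_top_of_le_ne_top ENNReal.ofReal_ne_top (hmeas.trans hlim)
  have hdim := dimH_le_of_hausdorffMeasure_ne_top hne
  have hco : ((Real.toNNReal (2-α) : ℝ≥0) : ℝ≥0∞) = ENNReal.ofReal (2-α) := rfl
  rw [hco] at hdim
  exact hdim

/-- For an integer `k ≥ 2` and bounded `f : ℕ → ℂ`, the series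
`F_{k,k}(f;t) = ∑ f(n) e^{2πi n^k t}/n^k` converges, is Hölder continuous with exponent
`1 − 1/k`, and the Hausdorff dimensions of the graphs of its absolute value, real part,
and imaginary part over `[0,1]` are each at most `1 + 1/k`. -/
theorem stmt_19 (k : ℕ) (hk : 2 ≤ k) (f : ℕ → ℂ) (B : ℝ)
    (hf : ∀ n : ℕ, ‖f n‖ ≤ B) :
    ∃ F : ℝ → ℂ,
      (∀ t : ℝ, Tendsto (fun N : ℕ => ∑ n ∈ Finset.Icc 1 N,
          f n * Complex.exp (2 * Real.pi * Complex.I * ((n : ℂ) ^ k) * (t : ℂ)) / ((n : ℂ) ^ k))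
        atTop (𝓝 (F t))) ∧
      (∃ C₁ : ℝ, 0 < C₁ ∧
        ∀ s t : ℝ, ‖F s - F t‖ ≤ C₁ * |s - t| ^ (1 - 1 / (k : ℝ))) ∧
      dimH {q : ℝ × ℝ | q.1 ∈ Set.Icc (0 : ℝ) 1 ∧ q.2 = ‖F q.1‖}
          ≤ ENNReal.ofReal (1 + 1 / (k : ℝ)) ∧
      dimH {q : ℝ × ℝ | q.1 ∈ Set.Icc (0 : ℝ) 1 ∧ q.2 = (F q.1).re}
          ≤ ENNReal.ofReal (1 + 1 / (k : ℝ)) ∧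
      dimH {q : ℝ × ℝ | q.1 ∈ Set.Icc (0 : ℝ) 1 ∧ q.2 = (F q.1).im}
          ≤ ENNReal.ofReal (1 + 1 / (k : ℝ)) := by
  have hB : 0 ≤ B := le_trans (norm_nonneg (f 0)) (hf 0)
  have hkR : (2:ℝ) ≤ (k:ℝ) := by exact_mod_cast hk
  have hk0 : (0:ℝ) < (k:ℝ) := by linarith
  have hinv : 1/(k:ℝ) ≤ 1/2 := by
    rw [div_le_div_iff₀ hk0 (by norm_num)]; linarith
  have hinv0 : 0 < 1/(k:ℝ) := by positivity
  have hα0 : 0 < 1 - 1/(k:ℝ) := by linarith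
  have hα1 : 1 - 1/(k:ℝ) ≤ 1 := by linarith
  have hC : (0:ℝ) ≤ 60*(B+1) := by linarith
  have hExp : (1:ℝ) + 1/(k:ℝ) = 2 - (1 - 1/(k:ℝ)) := by ring
  refine ⟨fun t => ∑' n, Fterm k f t n, fun t => F_tendsto k hk f B hf t,
    ⟨60*(B+1), by linarith, fun s t => holder_main k hk f B hf s t⟩, ?_, ?_, ?_⟩
  · rw [hExp]
    refine graph_dimH (fun x => ‖∑' n, Fterm k f x n‖) (60*(B+1))
      (1 - 1/(k:ℝ)) hC hα0 hα1 (fun s t => ?_)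
    calc |‖∑' n, Fterm k f s n‖ - ‖∑' n, Fterm k f t n‖|
        ≤ ‖(∑' n, Fterm k f s n) - ∑' n, Fterm k f t n‖ :=
          abs_norm_sub_norm_le _ _
      _ ≤ (60*(B+1)) * |s - t| ^ (1 - 1/(k:ℝ)) := holder_main k hk f B hf s t
  · rw [hExp]
    refine graph_dimH (fun x => (∑' n, Fterm k f x n).re) (60*(B+1))
      (1 - 1/(k:ℝ)) hC hα0 hα1 (fun s t => ?_)
    calc |(∑' n, Fterm k f s n).re - (∑' n, Fterm k f t n).re|
        = |((∑' n, Fterm k f s n) - ∑' n, Fterm k f t n).re| := by rw [Complex.sub_re]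
      _ ≤ ‖(∑' n, Fterm k f s n) - ∑' n, Fterm k f t n‖ :=
          Complex.abs_re_le_norm _
      _ ≤ (60*(B+1)) * |s - t| ^ (1 - 1/(k:ℝ)) := holder_main k hk f B hf s t
  · rw [hExp]
    refine graph_dimH (fun x => (∑' n, Fterm k f x n).im) (60*(B+1))
      (1 - 1/(k:ℝ)) hC hα0 hα1 (fun s t => ?_)
    calc |(∑' n, Fterm k f s n).im - (∑' n, Fterm k f t n).im|
        = |((∑' n, Fterm k f s n) - ∑' n, Fterm k f t n).im| := by rw [Complex.sub_im]
      _ ≤ ‖(∑' n, Fterm k f s n) - ∑' n, Fterm k f t n‖ :=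
          Complex.abs_im_le_norm _
      _ ≤ (60*(B+1)) * |s - t| ^ (1 - 1/(k:ℝ)) := holder_main k hk f B hf s t
end
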